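/- arXiv:1307.3574 — 15 statements merged into one kernel-verified Lean document; each statement's English description precedes it below -/
import Mathlib

section
/- Let K be a field, V a vector space over K with dim V ≠ 1, and f : V → V a group homomorphism (additive map) such that f(x) ∈ K·x for all x ∈ V. Then there exists λ ∈ K such that f(x) = λ·x for all x ∈ V. -/
private lemma key_aux {K V : Type*} [Field K] [AddCommGroup V] [Module K V]
    (f : V →+ V) (hf : ∀ x : V, f x ∈ Submodule.span K ({x} : Set V))
    {x y : V} (hx : x ≠ 0) (hy : y ∉ Submodule.span K ({x} : Set V))
    {a b : K} (ha : f x = a • x) (hb : f y = b • y) : a = b := by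
  obtain ⟨d, hd⟩ := Submodule.mem_span_singleton.mp (hf (x + y))
  have hsum : a • x + b • y = d • x + d • y := by
    rw [← ha, ← hb, ← map_add, ← smul_add]
    exact hd.symm
  have h1 : (b - d) • y = (d - a) • x := by
    rw [sub_smul, sub_smul, sub_eq_sub_iff_add_eq_add, add_comm]
    exact hsum
  by_cases hbd : b = d
  · rw [hbd, sub_self, zero_smul, eq_comm] at h1
    rcases smul_eq_zero.mp h1 with h | h
    · rw [hbd]; rw [sub_eq_zero] at h; exact h.symm
    · exact absurd h hx
  · exfalso
    apply hy
    have : y = ((b - d)⁻¹ * (d - a)) • x := by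
      rw [mul_smul, ← h1, ← mul_smul, inv_mul_cancel₀ (sub_ne_zero.mpr hbd), one_smul]
    exact Submodule.mem_span_singleton.mpr ⟨_, this.symm⟩

theorem stmt_0 {K V : Type*} [Field K] [AddCommGroup V] [Module K V]
    (hdim : Module.rank K V ≠ 1)
    (f : V →+ V) (hf : ∀ x : V, f x ∈ Submodule.span K ({x} : Set V)) :
    ∃ c : K, ∀ x : V, f x = c • x := by
  -- every nonzero x has some vector outside its span
  have hout : ∀ x : V, x ≠ 0 → ∃ z : V, z ∉ Submodule.span K ({x} : Set V) := by
    intro x hx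
    by_contra h
    push_neg at h
    have htop : Submodule.span K ({x} : Set V) = ⊤ := by
      rw [Submodule.eq_top_iff']; exact h
    apply hdim
    rw [rank_eq_one_iff]
    refine ⟨x, hx, fun v => ?_⟩
    obtain ⟨r, hr⟩ := Submodule.mem_span_singleton.mp (htop ▸ Submodule.mem_top : v ∈ Submodule.span K ({x} : Set V))
    exact ⟨r, hr⟩
  by_cases hV : ∃ x₀ : V, x₀ ≠ 0
  · obtain ⟨x₀, hx₀⟩ := hV
    obtain ⟨c, hc⟩ := Submodule.mem_span_singleton.mp (hf x₀)
    refine ⟨c, fun x => ?_⟩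
    by_cases hx : x = 0
    · simp [hx]
    obtain ⟨a, hax⟩ := Submodule.mem_span_singleton.mp (hf x)
    suffices h : a = c by rw [← hax, h]
    by_cases hmem : x₀ ∈ Submodule.span K ({x} : Set V)
    · -- span x = span x₀; pick z outside span x
      obtain ⟨z, hz⟩ := hout x hx
      obtain ⟨b, hbz⟩ := Submodule.mem_span_singleton.mp (hf z)
      have h1 : a = b := key_aux f hf hx hz hax.symm hbz.symm
      -- z ∉ span x₀
      obtain ⟨t, ht⟩ := Submodule.mem_span_singleton.mp hmem
      have ht0 : t ≠ 0 := by rintro rfl; simp at ht; exact hx₀ ht.symm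
      have hz' : z ∉ Submodule.span K ({x₀} : Set V) := by
        intro hzz
        obtain ⟨s, hs⟩ := Submodule.mem_span_singleton.mp hzz
        exact hz (Submodule.mem_span_singleton.mpr ⟨s * t, by rw [mul_smul, ht, hs]⟩)
      have h2 : c = b := key_aux f hf hx₀ hz' hc.symm hbz.symm
      rw [h1, h2]
    · exact key_aux f hf hx hmem hax.symm hc.symm
  · push_neg at hV
    refine ⟨0, fun x => ?_⟩
    rw [hV x, map_zero, smul_zero]
end

section
/- Let K be a field and n, p positive integers. Every range-compatible K-linear map F : Mat_{n,p}(K) → K^n is local; that is, if F is linear and F(M) ∈ column space of M for all M, then there exists X ∈ K^p with F(M) = M·X for all M. -/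
open Matrix

lemma scalar_lemma_aux {K : Type*} [Field K] {n : ℕ} (hn : 0 < n)
    (G : (Fin n → K) →ₗ[K] (Fin n → K))
    (h : ∀ u, ∃ c : K, G u = c • u) : ∃ c : K, ∀ u, G u = c • u := by
  set e : Fin n → (Fin n → K) := fun i => Pi.single i 1 with he
  have hcoef : ∀ i : Fin n, G (e i) = (G (e i) i) • e i := by
    intro i
    obtain ⟨c, hc⟩ := h (e i)
    have hci : G (e i) i = c := by rw [hc]; simp [he]
    rw [hci]; exact hc
  have hc_eq : ∀ i j : Fin n, G (e i) i = G (e j) j := by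
    intro i j
    rcases eq_or_ne i j with rfl | hij
    · rfl
    · obtain ⟨d, hd⟩ := h (e i + e j)
      rw [map_add] at hd
      have h1 := congrFun hd i
      have h2 := congrFun hd j
      simp only [Pi.add_apply, Pi.smul_apply, smul_eq_mul] at h1 h2
      rw [congrFun (hcoef i) i, congrFun (hcoef j) i] at h1
      rw [congrFun (hcoef i) j, congrFun (hcoef j) j] at h2
      simp [he, Pi.single_apply, hij, Ne.symm hij] at h1 h2
      rw [h1, h2]
  set i0 : Fin n := ⟨0, hn⟩
  refine ⟨G (e i0) i0, fun u => ?_⟩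
  have hu : u = ∑ i, u i • e i := by
    ext k; simp [he, Pi.single_apply, Finset.sum_apply]
  rw [hu, map_sum]
  simp only [G.map_smul]
  rw [Finset.smul_sum]
  refine Finset.sum_congr rfl fun i _ => ?_
  rw [hcoef i, hc_eq i i0, smul_smul, smul_smul, mul_comm]

theorem stmt_2 {K : Type*} [Field K] (n p : ℕ) (hn : 0 < n) (hp : 0 < p)
    (F : Matrix (Fin n) (Fin p) K →ₗ[K] (Fin n → K))
    (hrc : ∀ M : Matrix (Fin n) (Fin p) K, F M ∈ Set.range M.mulVec) :
    ∃ X : Fin p → K, ∀ M : Matrix (Fin n) (Fin p) K, F M = M.mulVec X := by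
  -- rank-one matrices: F (vecMulVec u y) is a multiple of u
  have key : ∀ y : Fin p → K, ∃ c : K, ∀ u : Fin n → K, F (vecMulVec u y) = c • u := by
    intro y
    set G : (Fin n → K) →ₗ[K] (Fin n → K) :=
      { toFun := fun u => F (vecMulVec u y)
        map_add' := fun u v => by
          have : vecMulVec (u + v) y = vecMulVec u y + vecMulVec v y := by
            ext i j; simp [Matrix.vecMulVec_apply, add_mul]
          show F (vecMulVec (u + v) y) = F (vecMulVec u y) + F (vecMulVec v y)
          rw [this, map_add]
        map_smul' := fun c u => by
          have : vecMulVec (c • u) y = c • vecMulVec u y := by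
            ext i j; simp [Matrix.vecMulVec_apply, mul_assoc]
          show F (vecMulVec (c • u) y) = c • F (vecMulVec u y)
          rw [this, F.map_smul] } with hG
    have := scalar_lemma_aux hn G (fun u => by
      obtain ⟨x, hx⟩ := hrc (vecMulVec u y)
      refine ⟨y ⬝ᵥ x, ?_⟩
      rw [hG]
      simp only [LinearMap.coe_mk, AddHom.coe_mk]
      rw [← hx]; ext i
      simp [vecMulVec, mulVec, dotProduct, Finset.mul_sum, mul_comm, mul_assoc, mul_left_comm])
    obtain ⟨c, hc⟩ := this
    exact ⟨c, fun u => hc u⟩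
  choose lam hlam using key
  -- linearity of lam
  set i0 : Fin n := ⟨0, hn⟩
  set e0 : Fin n → K := Pi.single i0 1 with he0
  have hlam_eval : ∀ y : Fin p → K, lam y = F (vecMulVec e0 y) i0 := by
    intro y
    rw [hlam y e0]
    simp [he0]
  refine ⟨fun j => lam (Pi.single j 1), fun M => ?_⟩
  -- decompose M into rank-one rows
  have hM : M = ∑ i, vecMulVec (Pi.single i (1:K)) (M i) := by
    ext k j; simp [vecMulVec, Pi.single_apply, Matrix.sum_apply]
  ext i
  calc F M i = (∑ k, F (vecMulVec (Pi.single k (1:K)) (M k))) i := by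
        conv_lhs => rw [hM, map_sum]
    _ = ∑ k, lam (M k) * (Pi.single k 1 : Fin n → K) i := by
        rw [Finset.sum_apply]
        exact Finset.sum_congr rfl fun k _ => by rw [hlam (M k)]; simp
    _ = lam (M i) := by simp [Pi.single_apply]
    _ = ∑ j, M i j * lam (Pi.single j 1) := by
        rw [hlam_eval (M i)]
        have : vecMulVec e0 (M i) = ∑ j, M i j • vecMulVec e0 (Pi.single j (1:K)) := by
          ext k l; simp [vecMulVec, Pi.single_apply, Matrix.sum_apply, Finset.mul_sum, mul_comm]
        rw [this, map_sum, Finset.sum_apply]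
        exact Finset.sum_congr rfl fun j _ => by
          rw [F.map_smul, hlam_eval (Pi.single j 1)]; simp
    _ = M.mulVec (fun j => lam (Pi.single j 1)) i := by simp [mulVec, dotProduct]
end

section
/- Let K be a field and n, p positive integers with n > 1. Every range-compatible additive map F : Mat_{n,p}(K) → K^n is local; that is, if F is a group homomorphism with F(M) ∈ column space of M for all M, there exists X ∈ K^p with F(M) = MX for all M. -/
open Matrix

theorem stmt_3 {K : Type*} [Field K] (n p : ℕ) (hn : 1 < n) (hp : 0 < p)
    (F : Matrix (Fin n) (Fin p) K →+ (Fin n → K))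
    (hrc : ∀ M : Matrix (Fin n) (Fin p) K, F M ∈ Set.range M.mulVec) :
    ∃ X : Fin p → K, ∀ M : Matrix (Fin n) (Fin p) K, F M = M.mulVec X := by
  set i0 : Fin n := ⟨0, by omega⟩ with hi0
  set i1 : Fin n := ⟨1, hn⟩ with hi1
  have hne : i0 ≠ i1 := by simp [hi0, hi1, Fin.ext_iff]
  -- key mulVec computation
  have hmv : ∀ (i : Fin n) (j : Fin p) (a : K) (v : Fin p → K) (k : Fin n),
      (Matrix.single i j a).mulVec v k = if k = i then a * v j else 0 := by
    intro i j a v k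
    simp [mulVec, dotProduct, Matrix.single, ite_and, eq_comm]
  -- F of a single-entry matrix vanishes off its row
  have hA : ∀ (a : K) (i : Fin n) (j : Fin p) (k : Fin n), k ≠ i →
      F (Matrix.single i j a) k = 0 := by
    intro a i j k hk
    obtain ⟨v, hv⟩ := hrc (Matrix.single i j a)
    rw [← hv, hmv, if_neg hk]
  -- value on row i is independent of i
  have hB : ∀ (a : K) (j : Fin p) (i k : Fin n), i ≠ k →
      F (Matrix.single i j a) i = F (Matrix.single k j a) k := by
    intro a j i k hik
    obtain ⟨v, hv⟩ := hrc (Matrix.single i j a + Matrix.single k j a)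
    have h1 := congrFun hv i
    have h2 := congrFun hv k
    rw [add_mulVec, map_add] at h1 h2
    simp only [Pi.add_apply, hmv, if_true] at h1 h2
    rw [if_neg hik, hA a k j i hik] at h1
    rw [if_neg (Ne.symm hik), hA a i j k (Ne.symm hik)] at h2
    simp only [add_zero, zero_add] at h1 h2
    rw [← h1, ← h2]
  set X : Fin p → K := fun j => F (Matrix.single i0 j 1) i0 with hX
  -- linearity in the entry
  have hC : ∀ (a : K) (j : Fin p), F (Matrix.single i0 j a) i0 = a * X j := by
    intro a j
    obtain ⟨v, hv⟩ := hrc (Matrix.single i0 j a + Matrix.single i1 j 1)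
    have h1 := congrFun hv i0
    have h2 := congrFun hv i1
    rw [add_mulVec, map_add] at h1 h2
    simp only [Pi.add_apply, hmv, if_true] at h1 h2
    rw [if_neg hne, hA 1 i1 j i0 hne] at h1
    rw [if_neg (Ne.symm hne), hA a i0 j i1 (Ne.symm hne)] at h2
    simp only [add_zero, zero_add, one_mul] at h1 h2
    have hvj : v j = X j := by
      rw [h2, hB 1 j i1 i0 (Ne.symm hne)]
    rw [← h1, hvj]
  -- F agrees with mulVec X on all single-entry matrices
  have hE : ∀ (a : K) (i : Fin n) (j : Fin p),
      F (Matrix.single i j a) = (Matrix.single i j a).mulVec X := by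
    intro a i j
    funext k
    rw [hmv]
    by_cases hk : k = i
    · subst hk
      rw [if_pos rfl]
      by_cases hik : k = i0
      · subst hik; exact hC a j
      · rw [hB a j k i0 hik]; exact hC a j
    · rw [if_neg hk]; exact hA a i j k hk
  refine ⟨X, fun M => ?_⟩
  have hrep := matrix_eq_sum_single M
  calc F M = F (∑ i : Fin n, ∑ j : Fin p, Matrix.single i j (M i j)) := by rw [← hrep]
    _ = ∑ i : Fin n, ∑ j : Fin p, F (Matrix.single i j (M i j)) := by
        simp only [map_sum]
    _ = ∑ i : Fin n, ∑ j : Fin p, (Matrix.single i j (M i j)).mulVec X := by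
        simp only [hE]
    _ = (∑ i : Fin n, ∑ j : Fin p, Matrix.single i j (M i j)).mulVec X := by
        let G : Matrix (Fin n) (Fin p) K →+ (Fin n → K) :=
          { toFun := fun A => A.mulVec X
            map_zero' := Matrix.zero_mulVec X
            map_add' := fun A B => Matrix.add_mulVec A B X }
        show ∑ i : Fin n, ∑ j : Fin p, G (Matrix.single i j (M i j)) = G _
        simp only [map_sum]
    _ = M.mulVec X := by rw [← hrep]
end

section
/- Let U := { [[a,b],[0,a]] : a,b ∈ K } ⊂ Mat_2(K) be the space of 2×2 upper-triangular matrices with equal diagonal entries, and define F : U → K^2 by F([[a,b],[0,a]]) = (b, 0). Then F is a range-compatible linear map that is not local, i.e., F(M) ∈ column space of M for every M ∈ U, but there is no X ∈ K^2 with F(M) = MX for all M ∈ U. -/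
theorem stmt_6 {K : Type*} [Field K] :
    (∀ a b : K, (![b, 0] : Fin 2 → K) ∈ Set.range (!![a, b; 0, a] : Matrix (Fin 2) (Fin 2) K).mulVec)
    ∧ ¬ ∃ X : Fin 2 → K, ∀ a b : K,
        (![b, 0] : Fin 2 → K) = (!![a, b; 0, a] : Matrix (Fin 2) (Fin 2) K).mulVec X := by
  constructor
  · intro a b
    by_cases ha : a = 0
    · refine ⟨![0, 1], ?_⟩
      subst ha
      funext i
      fin_cases i <;> simp [Matrix.mulVec, dotProduct]
    · refine ⟨![b / a, 0], ?_⟩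
      funext i
      fin_cases i <;> simp [Matrix.mulVec, dotProduct, ha, mul_div_cancel₀]
  · rintro ⟨X, hX⟩
    have h1 := congrFun (hX 0 1) 0
    have h2 := congrFun (hX 1 0) 1
    simp [Matrix.mulVec, dotProduct] at h1 h2
    rw [← h2] at h1
    simp at h1
end

section
/- Let K be a field of characteristic 2, n a positive integer, and α : K → K an additive map satisfying α(λ²x) = λ·α(x) for all λ, x ∈ K (α is root-linear). Then the map F : Sym_n(K) → K^n sending a symmetric matrix M to the vector (α(m_{1,1}), α(m_{2,2}), …, α(m_{n,n})) is range-compatible: F(M) lies in the column space of M for every symmetric matrix M. -/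
theorem stmt_7 {K : Type*} [Field K] [CharP K 2] (n : ℕ) (hn : 0 < n)
    (α : K → K) (hadd : ∀ x y : K, α (x + y) = α x + α y)
    (hroot : ∀ l x : K, α (l ^ 2 * x) = l * α x)
    (M : Matrix (Fin n) (Fin n) K) (hM : M.IsSymm) :
    (fun i => α (M i i)) ∈ Set.range M.mulVec := by
  have α0 : α 0 = 0 := by
    have := hadd 0 0; simpa using this.symm
  by_contra hv
  have hv' : (fun i => α (M i i)) ∉ LinearMap.range M.mulVecLin := by
    intro h
    obtain ⟨x, hx⟩ := h
    exact hv ⟨x, by simpa [Matrix.mulVecLin_apply] using hx⟩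
  obtain ⟨f, hfv, hfbot⟩ :=
    Submodule.exists_dual_map_eq_bot_of_notMem hv' inferInstance
  set y : Fin n → K := fun i => f (fun j => if i = j then 1 else 0) with hy
  have hfzero : ∀ x, f (M.mulVec x) = 0 := by
    intro x
    have hmem : f (M.mulVec x) ∈ (LinearMap.range M.mulVecLin).map f :=
      ⟨M.mulVec x, ⟨x, rfl⟩, rfl⟩
    rw [hfbot] at hmem
    simpa using hmem
  have hfeq : ∀ w : Fin n → K, f w = ∑ i, w i * y i := by
    intro w
    rw [LinearMap.pi_apply_eq_sum_univ f w]
    simp [hy, smul_eq_mul]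
  -- M y = 0 (using symmetry)
  have hMy : ∀ i, ∑ j, M i j * y j = 0 := by
    intro i
    have h := hfzero (fun j => if i = j then 1 else 0)
    rw [hfeq] at h
    have hcol : ∀ k, M.mulVec (fun j => if i = j then 1 else 0) k = M k i := by
      intro k
      simp [Matrix.mulVec, dotProduct, eq_comm]
    calc ∑ j, M i j * y j = ∑ j, M j i * y j := by
          refine Finset.sum_congr rfl fun j _ => ?_
          rw [← hM.apply i j]
      _ = 0 := by
          rw [← h]
          exact Finset.sum_congr rfl fun j _ => by rw [hcol j]
  -- key quadratic identity
  have hchar2 : ∀ a : K, a + a = 0 := fun a => by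
    have : (2 : K) * a = 0 := by
      rw [show (2 : K) = 0 from by exact_mod_cast (CharP.cast_eq_zero K 2), zero_mul]
    linear_combination this
  have hquad : ∑ i, y i ^ 2 * M i i = 0 := by
    have h0 : ∑ i, y i * ∑ j, M i j * y j = 0 := by
      simp [hMy]
    have hexp : ∑ i, y i * ∑ j, M i j * y j
        = ∑ p ∈ (Finset.univ ×ˢ Finset.univ : Finset (Fin n × Fin n)),
            y p.1 * M p.1 p.2 * y p.2 := by
      rw [Finset.sum_product]
      simp [Finset.mul_sum, mul_assoc]
    classical
    have hsplit : ∑ p ∈ (Finset.univ ×ˢ Finset.univ : Finset (Fin n × Fin n)),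
            y p.1 * M p.1 p.2 * y p.2
        = (∑ p ∈ (Finset.univ ×ˢ Finset.univ : Finset (Fin n × Fin n)).filter
              (fun p => p.1 = p.2), y p.1 * M p.1 p.2 * y p.2)
          + ∑ p ∈ (Finset.univ ×ˢ Finset.univ : Finset (Fin n × Fin n)).filter
              (fun p => ¬ p.1 = p.2), y p.1 * M p.1 p.2 * y p.2 :=
      (Finset.sum_filter_add_sum_filter_not _ _ _).symm
    have hdiag : ∑ p ∈ (Finset.univ ×ˢ Finset.univ : Finset (Fin n × Fin n)).filter
              (fun p => p.1 = p.2), y p.1 * M p.1 p.2 * y p.2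
        = ∑ i, y i ^ 2 * M i i := by
      rw [Finset.sum_filter, Finset.sum_product]
      refine Finset.sum_congr rfl fun i _ => ?_
      rw [Finset.sum_ite_eq (Finset.univ) i (fun j => y i * M i j * y j)]
      simp only [Finset.mem_univ, if_true]
      ring
    have hoff : ∑ p ∈ (Finset.univ ×ˢ Finset.univ : Finset (Fin n × Fin n)).filter
              (fun p => ¬ p.1 = p.2), y p.1 * M p.1 p.2 * y p.2 = 0 := by
      refine Finset.sum_involution (fun p _ => (p.2, p.1)) ?_ ?_ ?_ ?_
      · intro p _
        have hsym : M p.2 p.1 = M p.1 p.2 := by rw [← hM.apply p.2 p.1]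
        have : y p.1 * M p.1 p.2 * y p.2 + y p.2 * M p.2 p.1 * y p.1
            = (y p.1 * M p.1 p.2 * y p.2) + (y p.1 * M p.1 p.2 * y p.2) := by
          rw [hsym]; ring
        rw [this, hchar2]
      · intro p hp _ h
        simp only [Finset.mem_filter] at hp
        exact hp.2 (congrArg Prod.fst h).symm
      · intro p hp
        simp only [Finset.mem_filter, Finset.mem_product] at hp ⊢
        exact ⟨⟨Finset.mem_univ _, Finset.mem_univ _⟩, fun h => hp.2 h.symm⟩
      · intro p _; rfl
    rw [hexp, hsplit, hdiag, hoff, add_zero] at h0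
    exact h0
  -- α as additive hom
  let φ : K →+ K := ⟨⟨α, α0⟩, hadd⟩
  have hfval : f (fun i => α (M i i)) = 0 := by
    rw [hfeq]
    have : ∑ i, α (M i i) * y i = ∑ i, α (y i ^ 2 * M i i) := by
      refine Finset.sum_congr rfl fun i _ => ?_
      rw [hroot (y i) (M i i)]; ring
    rw [this, show ∑ i, α (y i ^ 2 * M i i) = φ (∑ i, y i ^ 2 * M i i) from
      (map_sum φ _ _).symm, hquad]
    exact α0
  exact hfv hfval
end

section
/- Let K be a perfect field of characteristic 2 and M an n×n symmetric matrix over K. Then the vector (√m_{1,1}, …, √m_{n,n}) of square roots of the diagonal entries of M lies in the column space of M. -/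
open Matrix LinearMap Finset

theorem stmt_8 {K : Type*} [Field K] [CharP K 2]
    (sqrt : K → K) (hsqrt : ∀ x : K, sqrt x * sqrt x = x)
    (n : ℕ) (M : Matrix (Fin n) (Fin n) K) (hM : M.IsSymm) :
    (fun i => sqrt (M i i)) ∈ Set.range M.mulVec := by
  classical
  have h2 : (2 : K) = 0 := by simpa using CharP.cast_eq_zero K 2
  -- the standard dot-product bilinear form
  set B : LinearMap.BilinForm K (Fin n → K) :=
    LinearMap.mk₂ K (fun x y => x ⬝ᵥ y)
      (fun x y z => add_dotProduct x y z)
      (fun c x y => smul_dotProduct c x y)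
      (fun x y z => dotProduct_add x y z)
      (fun c x y => dotProduct_smul c x y) with hBdef
  have hBapp : ∀ x y : Fin n → K, B x y = x ⬝ᵥ y := fun x y => rfl
  have hBrefl : B.IsRefl := by
    intro x y h
    rw [hBapp] at h ⊢
    rw [dotProduct_comm]
    exact h
  have hBnd : B.Nondegenerate := by
    refine (LinearMap.IsRefl.nondegenerate_iff_separatingLeft hBrefl).mpr ?_
    intro x hx
    funext i
    have := hx (Pi.single i 1)
    rwa [hBapp, dotProduct_single, mul_one] at this
  set W : Submodule K (Fin n → K) := LinearMap.range M.mulVecLin with hW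
  have key : (fun i => sqrt (M i i)) ∈ B.orthogonal (B.orthogonal W) := by
    intro x hx
    have hx0 : (M.mulVec x) ⬝ᵥ x = 0 := hx (M.mulVec x) ⟨x, rfl⟩
    -- rewrite x ⬝ᵥ Mx as the diagonal sum, the off-diagonal part cancels in char 2
    have hsum : ∑ p ∈ (Finset.univ : Finset (Fin n)) ×ˢ Finset.univ,
        M p.1 p.2 * x p.2 * x p.1 = ∑ i, M i i * x i * x i := by
      rw [← Finset.diag_union_offDiag,
        Finset.sum_union (Finset.disjoint_diag_offDiag _), Finset.sum_diag]
      have hoff : ∑ p ∈ (Finset.univ : Finset (Fin n)).offDiag,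
          M p.1 p.2 * x p.2 * x p.1 = 0 := by
        apply Finset.sum_involution (g := fun p _ => (p.2, p.1))
        · intro p hp
          have hsymm : M p.2 p.1 = M p.1 p.2 := by
            have := congrFun (congrFun hM p.1) p.2
            simpa [Matrix.transpose_apply] using this
          have : M p.1 p.2 * x p.2 * x p.1 + M p.2 p.1 * x p.1 * x p.2
              = 2 * (M p.1 p.2 * x p.2 * x p.1) := by ring_nf; rw [hsymm]; ring
          rw [this, h2, zero_mul]
        · intro p hp _
          simp only [Finset.mem_offDiag, Finset.mem_univ, true_and] at hp
          intro hc
          exact hp (congrArg Prod.fst hc).symm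
        · intro p hp
          simp only [Finset.mem_offDiag, Finset.mem_univ, true_and] at hp ⊢
          exact Ne.symm hp
        · intro p hp
          rfl
      rw [hoff, add_zero]
    have hmain : ∑ i, M i i * x i * x i = 0 := by
      rw [← hsum]
      rw [Finset.sum_product]
      rw [← hx0, dotProduct]
      simp only [mulVec, dotProduct, Finset.sum_mul]
    -- freshman's dream: the square of x ⬝ᵥ d is the diagonal sum
    have hfrob : (x ⬝ᵥ fun i => sqrt (M i i)) * (x ⬝ᵥ fun i => sqrt (M i i)) = 0 := by
      have : (x ⬝ᵥ fun i => sqrt (M i i)) * (x ⬝ᵥ fun i => sqrt (M i i))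
          = (x ⬝ᵥ fun i => sqrt (M i i)) ^ 2 := by ring
      rw [this, dotProduct]
      have hmap : (∑ i, x i * sqrt (M i i)) ^ 2 = ∑ i, (x i * sqrt (M i i)) ^ 2 := by
        have := map_sum (frobenius K 2) (fun i => x i * sqrt (M i i)) Finset.univ
        simpa only [_root_.frobenius_def] using this
      rw [hmap, ← hmain]
      congr 1; funext i
      rw [mul_pow, sq, sq, hsqrt]
      ring
    have : B x (fun i => sqrt (M i i)) = 0 := by
      rw [hBapp]
      exact mul_self_eq_zero.mp hfrob
    exact this
  rw [LinearMap.BilinForm.orthogonal_orthogonal hBnd hBrefl] at key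
  obtain ⟨v, hv⟩ := key
  exact ⟨v, hv⟩
end

section
/- Let K be a field of characteristic not 2 and n ≥ 2. Every range-compatible group homomorphism F : Sym_n(K) → K^n is local: if F is additive and F(M) lies in the column space of M for every symmetric n×n matrix M, then there exists X ∈ K^n with F(M) = MX for all M ∈ Sym_n(K). -/
namespace Stmt9Aux

variable {K : Type*} [Field K] {n : ℕ}

/-- single-entry matrix at (i,j) -/
def Ed (i j : Fin n) (c : K) : Matrix (Fin n) (Fin n) K :=
  fun k l => if k = i ∧ l = j then c else 0

def D (i : Fin n) (c : K) : Matrix (Fin n) (Fin n) K := Ed i i c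

def Nd (i j : Fin n) (c : K) : Matrix (Fin n) (Fin n) K := Ed i j c + Ed j i c

lemma D_symm (i : Fin n) (c : K) : (D i c).IsSymm := by
  unfold Matrix.IsSymm
  ext k l
  simp only [Matrix.transpose_apply, D, Ed]
  by_cases h1 : k = i <;> by_cases h2 : l = i <;> simp [h1, h2]

lemma Nd_symm (i j : Fin n) (c : K) : (Nd i j c).IsSymm := by
  unfold Matrix.IsSymm
  ext k l
  simp only [Matrix.transpose_apply, Nd, Ed, Matrix.add_apply]
  by_cases h1 : k = i <;> by_cases h2 : l = i <;> by_cases h3 : k = j <;> by_cases h4 : l = j <;>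
    simp [h1, h2, h3, h4, and_comm, add_comm]

lemma D_add (i : Fin n) (c d : K) : D i (c + d) = D i c + D i d := by
  ext k l
  simp only [D, Ed, Matrix.add_apply]
  split_ifs <;> simp

lemma Nd_add (i j : Fin n) (c d : K) : Nd i j (c + d) = Nd i j c + Nd i j d := by
  ext k l
  simp only [Nd, Ed, Matrix.add_apply]
  split_ifs <;> ring

lemma Ed_mulVec (i j : Fin n) (c : K) (y : Fin n → K) (k : Fin n) :
    (Ed i j c).mulVec y k = if k = i then c * y j else 0 := by
  simp only [Matrix.mulVec, dotProduct, Ed, ite_and, ite_mul, zero_mul]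
  by_cases h : k = i
  · simp [h, Finset.sum_ite_eq']
  · simp [h]

lemma D_mulVec (i : Fin n) (c : K) (y : Fin n → K) (k : Fin n) :
    (D i c).mulVec y k = if k = i then c * y i else 0 := Ed_mulVec i i c y k

lemma Nd_mulVec (i j : Fin n) (c : K) (y : Fin n → K) (k : Fin n) :
    (Nd i j c).mulVec y k = (if k = i then c * y j else 0) + (if k = j then c * y i else 0) := by
  simp [Nd, Matrix.add_mulVec, Ed_mulVec]

end Stmt9Aux

namespace Stmt9Aux

section Pair

variable {K : Type*} [Field K] {n : ℕ}
variable (hchar : ringChar K ≠ 2)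
variable (F : Matrix (Fin n) (Fin n) K → (Fin n → K))
variable (hadd : ∀ M N : Matrix (Fin n) (Fin n) K, M.IsSymm → N.IsSymm → F (M + N) = F M + F N)
variable (hrc : ∀ M : Matrix (Fin n) (Fin n) K, M.IsSymm → F M ∈ Set.range M.mulVec)

include hadd hrc

lemma Dsupp (i : Fin n) (c : K) (k : Fin n) (hk : k ≠ i) : F (D i c) k = 0 := by
  obtain ⟨y, hy⟩ := hrc (D i c) (D_symm i c)
  rw [← hy, D_mulVec, if_neg hk]

lemma Nsupp (i j : Fin n) (c : K) (k : Fin n) (hki : k ≠ i) (hkj : k ≠ j) :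
    F (Nd i j c) k = 0 := by
  obtain ⟨y, hy⟩ := hrc (Nd i j c) (Nd_symm i j c)
  rw [← hy, Nd_mulVec, if_neg hki, if_neg hkj, add_zero]

include hchar

lemma pair (i j : Fin n) (hij : i ≠ j) :
    (∀ c : K, F (D i c) i = c * F (D i 1) i) ∧
    (∀ c : K, F (Nd i j c) i = c * F (D j 1) j) ∧
    (∀ c : K, F (Nd i j c) j = c * F (D i 1) i) := by
  classical
  have hji : j ≠ i := hij.symm
  -- additivity of the four coefficient functions
  have haA : ∀ u v : K, F (D i (u + v)) i = F (D i u) i + F (D i v) i := by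
    intro u v; rw [D_add, hadd _ _ (D_symm i u) (D_symm i v)]; rfl
  have haB : ∀ u v : K, F (D j (u + v)) j = F (D j u) j + F (D j v) j := by
    intro u v; rw [D_add, hadd _ _ (D_symm j u) (D_symm j v)]; rfl
  have haP : ∀ u v : K, F (Nd i j (u + v)) i = F (Nd i j u) i + F (Nd i j v) i := by
    intro u v; rw [Nd_add, hadd _ _ (Nd_symm i j u) (Nd_symm i j v)]; rfl
  have haQ : ∀ u v : K, F (Nd i j (u + v)) j = F (Nd i j u) j + F (Nd i j v) j := by
    intro u v; rw [Nd_add, hadd _ _ (Nd_symm i j u) (Nd_symm i j v)]; rfl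
  -- the key functional equation from rank-one matrices
  have star : ∀ c t : K,
      F (D j (c*t^2)) j + F (Nd i j (c*t)) j
        = t * (F (D i c) i + F (Nd i j (c*t)) i) := by
    intro c t
    set W : Matrix (Fin n) (Fin n) K := D i c + (D j (c*t^2) + Nd i j (c*t)) with hW
    have hWsymm : W.IsSymm :=
      (D_symm i c).add ((D_symm j (c*t^2)).add (Nd_symm i j (c*t)))
    obtain ⟨y, hy⟩ := hrc W hWsymm
    have hFW : F W = F (D i c) + (F (D j (c*t^2)) + F (Nd i j (c*t))) := by
      rw [hW, hadd _ _ (D_symm i c) ((D_symm j (c*t^2)).add (Nd_symm i j (c*t))),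
        hadd _ _ (D_symm j (c*t^2)) (Nd_symm i j (c*t))]
    have hWi : F W i = c * y i + c*t * y j := by
      rw [← hy, hW, Matrix.add_mulVec, Matrix.add_mulVec]
      simp [Pi.add_apply, D_mulVec, Nd_mulVec, hij, hji]
    have hWj : F W j = c*t^2 * y j + c*t * y i := by
      rw [← hy, hW, Matrix.add_mulVec, Matrix.add_mulVec]
      simp [Pi.add_apply, D_mulVec, Nd_mulVec, hij, hji]
    have hrel : F W j = t * F W i := by rw [hWi, hWj]; ring
    have hFWi : F W i = F (D i c) i + F (Nd i j (c*t)) i := by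
      rw [hFW]; simp [Dsupp F hadd hrc j _ i hij]
    have hFWj : F W j = F (D j (c*t^2)) j + F (Nd i j (c*t)) j := by
      rw [hFW]; simp [Dsupp F hadd hrc i c j hji]
    rw [← hFWi, ← hFWj, hrel]
  -- derive (J): p(ct) + t p(c) = 2 b(ct)
  have hJ : ∀ c t : K,
      F (Nd i j (c*t)) i + t * F (Nd i j c) i = 2 * F (D j (c*t)) j := by
    intro c t
    have h1 := star c t
    have h2 := star c 1
    have h3 := star c (t+1)
    rw [show c*(t+1)^2 = c*t^2 + (c*t + (c*t + c)) by ring,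
      show c*(t+1) = c*t + c by ring, haB, haB, haB, haQ, haP] at h3
    rw [show c*(1:K)^2 = c*1 by ring] at h2
    rw [mul_one, one_mul] at h2
    linear_combination h1 + h2 - h3
  have two_ne : (2:K) ≠ 0 := Ring.two_ne_zero hchar
  -- b = p
  have hbp : ∀ u : K, F (D j u) j = F (Nd i j u) i := by
    intro u
    have h := hJ u 1
    rw [mul_one, one_mul] at h
    apply mul_left_cancel₀ two_ne
    linear_combination -h
  -- p(ct) = t p(c)
  have hpscale : ∀ c t : K, F (Nd i j (c*t)) i = t * F (Nd i j c) i := by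
    intro c t
    have h := hJ c t
    rw [hbp (c*t)] at h
    linear_combination -h
  -- q(ct) = t a(c)
  have hqscale : ∀ c t : K, F (Nd i j (c*t)) j = t * F (D i c) i := by
    intro c t
    have h := star c t
    have e1 : F (D j (c*t^2)) j = t^2 * F (Nd i j c) i := by
      rw [hbp (c*t^2), show c*t^2 = c*(t^2) by ring, hpscale c (t^2)]
    have e2 : F (Nd i j (c*t)) i = t * F (Nd i j c) i := hpscale c t
    linear_combination h - e1 + t * e2
  refine ⟨?_, ?_, ?_⟩
  · intro c
    have h1 := hqscale 1 c
    have h2 := hqscale c 1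
    rw [one_mul] at h1
    rw [mul_one, one_mul] at h2
    rw [show c = 1*c by ring] at h2 ⊢
    rw [one_mul] at h2 ⊢
    rw [← h2, h1]
  · intro c
    have h1 := hpscale 1 c
    rw [one_mul] at h1
    rw [h1, ← hbp 1]
  · intro c
    have h1 := hqscale 1 c
    rw [one_mul] at h1
    exact h1

end Pair

end Stmt9Aux

namespace Stmt9Aux

section Main

variable {K : Type*} [Field K] {n : ℕ}

lemma sum_mulVec {ι : Type*} (s : Finset ι) (A : ι → Matrix (Fin n) (Fin n) K)
    (x : Fin n → K) : (∑ i ∈ s, A i).mulVec x = ∑ i ∈ s, (A i).mulVec x := by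
  classical
  induction s using Finset.induction_on with
  | empty => simp [Matrix.zero_mulVec]
  | @insert a s ha ih => rw [Finset.sum_insert ha, Finset.sum_insert ha, Matrix.add_mulVec, ih]

lemma isSymm_sum {ι : Type*} (s : Finset ι) (A : ι → Matrix (Fin n) (Fin n) K)
    (h : ∀ i ∈ s, (A i).IsSymm) : (∑ i ∈ s, A i).IsSymm :=
  Finset.sum_induction A Matrix.IsSymm (fun _ _ ha hb => ha.add hb) Matrix.isSymm_zero h

variable (F : Matrix (Fin n) (Fin n) K → (Fin n → K))
variable (hadd : ∀ M N : Matrix (Fin n) (Fin n) K, M.IsSymm → N.IsSymm → F (M + N) = F M + F N)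

include hadd

lemma F_zero : F 0 = 0 := by
  have h := hadd 0 0 Matrix.isSymm_zero Matrix.isSymm_zero
  rw [add_zero] at h
  exact (add_eq_left.mp h.symm)

lemma Fsum {ι : Type*} (s : Finset ι) (f : ι → Matrix (Fin n) (Fin n) K)
    (h : ∀ i ∈ s, (f i).IsSymm) : F (∑ i ∈ s, f i) = ∑ i ∈ s, F (f i) := by
  classical
  induction s using Finset.induction_on with
  | empty => simpa using F_zero F hadd
  | @insert a s ha ih =>
    rw [Finset.sum_insert ha, Finset.sum_insert ha,
      hadd _ _ (h a (Finset.mem_insert_self a s))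
        (isSymm_sum s f fun i hi => h i (Finset.mem_insert_of_mem hi)),
      ih fun i hi => h i (Finset.mem_insert_of_mem hi)]

end Main

end Stmt9Aux

theorem stmt_9 {K : Type*} [Field K] (hchar : ringChar K ≠ 2) (n : ℕ) (hn : 2 ≤ n)
    (F : Matrix (Fin n) (Fin n) K → (Fin n → K))
    (hadd : ∀ M N : Matrix (Fin n) (Fin n) K, M.IsSymm → N.IsSymm → F (M + N) = F M + F N)
    (hrc : ∀ M : Matrix (Fin n) (Fin n) K, M.IsSymm → F M ∈ Set.range M.mulVec) :
    ∃ X : Fin n → K, ∀ M : Matrix (Fin n) (Fin n) K, M.IsSymm → F M = M.mulVec X := by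
  classical
  open Stmt9Aux in
  refine ⟨fun i => F (Stmt9Aux.D i 1) i, ?_⟩
  intro M hM
  set X : Fin n → K := fun i => F (Stmt9Aux.D i 1) i with hX
  have two_ne : (2:K) ≠ 0 := Ring.two_ne_zero hchar
  have hnt : Nontrivial (Fin n) :=
    ⟨⟨⟨0, by omega⟩, ⟨1, by omega⟩, by simp [Fin.ext_iff]⟩⟩
  -- linearity of F on the basic matrices
  have hD_lin : ∀ (i : Fin n) (c : K), F (Stmt9Aux.D i c) = (Stmt9Aux.D i c).mulVec X := by
    intro i c
    obtain ⟨j0, hj0⟩ := exists_ne i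
    have hp := Stmt9Aux.pair hchar F hadd hrc i j0 (Ne.symm hj0)
    funext k
    by_cases hk : k = i
    · subst hk
      rw [Stmt9Aux.D_mulVec, if_pos rfl]
      exact hp.1 c
    · rw [Stmt9Aux.D_mulVec, if_neg hk]
      exact Stmt9Aux.Dsupp F hadd hrc i c k hk
  have hN_lin : ∀ (i j : Fin n), i ≠ j → ∀ c : K,
      F (Stmt9Aux.Nd i j c) = (Stmt9Aux.Nd i j c).mulVec X := by
    intro i j hij c
    have hp := Stmt9Aux.pair hchar F hadd hrc i j hij
    funext k
    rw [Stmt9Aux.Nd_mulVec]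
    by_cases hk : k = i
    · subst hk
      rw [if_pos rfl, if_neg hij, add_zero]
      exact hp.2.1 c
    · by_cases hk2 : k = j
      · subst hk2
        rw [if_neg hk, if_pos rfl, zero_add]
        exact hp.2.2 c
      · rw [if_neg hk, if_neg hk2, add_zero]
        exact Stmt9Aux.Nsupp F hadd hrc i j c k hk hk2
  -- decomposition of M
  set U : Fin n → Fin n → Matrix (Fin n) (Fin n) K := fun i j =>
    if i = j then Stmt9Aux.D i (M i i) else Stmt9Aux.Nd i j (M i j / 2) with hU
  have half : ∀ a : K, a / 2 + a / 2 = a := by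
    intro a
    rw [← add_div]
    exact (div_eq_iff two_ne).mpr (by ring)
  have hU' : ∀ i j k l : Fin n, U i j k l =
      (if l = j ∧ k = i then M i j / 2 else 0) + (if k = j ∧ l = i then M i j / 2 else 0) := by
    intro i j k l
    by_cases h : i = j
    · subst h
      simp only [hU, if_pos rfl, Stmt9Aux.D, Stmt9Aux.Ed]
      by_cases h1 : k = i <;> by_cases h2 : l = i <;> simp [h1, h2, half]
    · simp only [hU, if_neg h, Stmt9Aux.Nd, Stmt9Aux.Ed, Matrix.add_apply]
      congr 1 <;> simp [and_comm]
  have hUsymm : ∀ i j, (U i j).IsSymm := by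
    intro i j
    by_cases h : i = j <;> simp [hU, h, Stmt9Aux.D_symm, Stmt9Aux.Nd_symm]
  have hdecomp : M = ∑ i : Fin n, ∑ j : Fin n, U i j := by
    ext k l
    simp only [Matrix.sum_apply, hU', Finset.sum_add_distrib]
    rw [show (∑ i : Fin n, ∑ j : Fin n, if l = j ∧ k = i then M i j / 2 else 0) = M k l / 2 by
        simp [ite_and, Finset.sum_ite_eq],
      show (∑ i : Fin n, ∑ j : Fin n, if k = j ∧ l = i then M i j / 2 else 0) = M l k / 2 by
        simp [ite_and, Finset.sum_ite_eq],
      hM.apply k l, half]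
  have hUF : ∀ i j, F (U i j) = (U i j).mulVec X := by
    intro i j
    by_cases h : i = j
    · simp only [hU, if_pos h]
      exact hD_lin i (M i i)
    · simp only [hU, if_neg h]
      exact hN_lin i j h _
  calc F M = F (∑ i : Fin n, ∑ j : Fin n, U i j) := by rw [← hdecomp]
    _ = ∑ i : Fin n, F (∑ j : Fin n, U i j) :=
        Stmt9Aux.Fsum F hadd _ _ (fun i _ => Stmt9Aux.isSymm_sum _ _ fun j _ => hUsymm i j)
    _ = ∑ i : Fin n, ∑ j : Fin n, F (U i j) :=
        Finset.sum_congr rfl fun i _ => Stmt9Aux.Fsum F hadd _ _ fun j _ => hUsymm i j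
    _ = ∑ i : Fin n, ∑ j : Fin n, (U i j).mulVec X :=
        Finset.sum_congr rfl fun i _ => Finset.sum_congr rfl fun j _ => hUF i j
    _ = (∑ i : Fin n, ∑ j : Fin n, U i j).mulVec X := by
        rw [Stmt9Aux.sum_mulVec]
        exact Finset.sum_congr rfl fun i _ => (Stmt9Aux.sum_mulVec _ _ _).symm
    _ = M.mulVec X := by rw [← hdecomp]
end

section
/- Let K be a field of characteristic 2 and n ≥ 2. Every range-compatible group homomorphism F : Sym_n(K) → K^n is the sum of a local map and a map of the form M ↦ (α(m_{1,1}), …, α(m_{n,n})) for some root-linear form α on K; that is, there exist X ∈ K^n and an additive map α : K → K with α(λ²x) = λα(x) such that F(M) = MX + (α(m_{1,1}), …, α(m_{n,n})) for all symmetric M. -/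
section ALG
variable {K : Type*} [Field K] [CharP K 2]

private lemma ct_eq {a b : K} (h : a + b = 0) : a = b := by
  have h2 : a = -b := eq_neg_of_add_eq_zero_left h
  rwa [CharTwo.neg_eq] at h2

private lemma alg_main (α1 α2 A B : K → K)
    (hα1 : ∀ x y, α1 (x + y) = α1 x + α1 y)
    (hα2 : ∀ x y, α2 (x + y) = α2 x + α2 y)
    (hA : ∀ x y, A (x + y) = A x + A y)
    (hB : ∀ x y, B (x + y) = B x + B y)
    (P : ∀ c x y, y * (α1 (c*x^2) + B (c*x*y)) = x * (α2 (c*y^2) + A (c*x*y))) :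
    (∀ x, A x = x * A 1) ∧ (∀ x, B x = x * B 1) ∧
    (∀ c x, α1 (c * x^2) = x * α1 c + c*x*A 1 + c*x^2*A 1) ∧
    (∀ c, α2 c = α1 c + c * B 1 + c * A 1) := by
  have htwo : (2:K) = 0 := CharTwo.two_eq_zero
  have h6 : ∀ c, α1 c + B c = α2 c + A c := by
    intro c; have h := P c 1 1; simpa using h
  have h7 : ∀ c x, α1 (c*x^2) + B (c*x) = x * (α2 c + A (c*x)) := by
    intro c x; have h := P c x 1; simpa using h
  have h8 : ∀ c y, α2 (c*y^2) + A (c*y) = y * (α1 c + B (c*y)) := by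
    intro c y; have h := (P c 1 y).symm; simpa using h
  have h9 : ∀ c x y, x*y*α2 c + x*y*A (c*x) + y*B (c*x) + y*B (c*x*y)
      + x*y*α1 c + x*y*B (c*y) + x*A (c*y) + x*A (c*x*y) = 0 := by
    intro c x y
    linear_combination (P c x y) - y * (h7 c x) + x * (h8 c y)
      + (x*A (c*x*y) + y*B (c*x) + x*y*α1 c + x*y*B (c*y)) * htwo
  have h3' : ∀ x y, x*y*α2 1 + x*y*A x + y*B x + y*B (x*y)
      + x*y*α1 1 + x*y*B y + x*A y + x*A (x*y) = 0 := by
    intro x y; have h := h9 1 x y; simpa only [one_mul] using h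
  have h4B : ∀ x y z, y*B (x*z) + z*B (x*y) + x*y*B z + x*z*B y = 0 := by
    intro x y z
    have e1 := h3' x (y+z)
    rw [mul_add x y z] at e1
    rw [hB (x*y) (x*z), hB y z, hA y z, hA (x*y) (x*z)] at e1
    linear_combination e1 - h3' x y - h3' x z
  have h4A : ∀ x y w, x*y*A w + w*y*A x + w*A (x*y) + x*A (w*y) = 0 := by
    intro x y w
    have e2 := h3' (x+w) y
    rw [add_mul x w y] at e2
    rw [hB (x*y) (w*y), hB x w, hA x w, hA (x*y) (w*y)] at e2
    linear_combination e2 - h3' x y - h3' w y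
  have hBm : ∀ u v, B (u*v) = u * B v + v * B u + u*v*B 1 := by
    intro u v
    have h := h4B u v 1
    simp only [mul_one, one_mul] at h
    linear_combination h - (u*B v + v*B u + u*v*B 1) * htwo
  have hAm : ∀ u v, A (u*v) = u * A v + v * A u + u*v*A 1 := by
    intro u v
    have h := h4A u v 1
    simp only [mul_one, one_mul] at h
    linear_combination h - (u*A v + v*A u + u*v*A 1) * htwo
  have hstar : ∀ x y, y*(1+y)*(B x + x*B 1) + x*(1+x)*(A y + y*A 1) = 0 := by
    intro x y
    linear_combination (h3' x y) - y*(hBm x y) - x*(hAm x y) + x*y*(h6 1)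
      + (x*y*A 1 - x*y*α1 1 - x*y*A x - x*y*B y)*htwo
  have hABlin : (∀ x, A x = x * A 1) ∧ (∀ x, B x = x * B 1) := by
    by_cases hex : ∃ y0 : K, y0 * (1 + y0) ≠ 0
    · obtain ⟨y0, hy0⟩ := hex
      set k : K := (A y0 + y0 * A 1) / (y0 * (1+y0)) with hkdef
      have hk : k * (y0*(1+y0)) = A y0 + y0*A 1 := div_mul_cancel₀ _ hy0
      have hdB : ∀ x, B x + x*B 1 = x*(1+x)*k := by
        intro x
        apply mul_left_cancel₀ hy0
        have h := hstar x y0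
        linear_combination h + x*(1+x)*hk - x*(1+x)*k*(y0*(1+y0))*htwo
      have hdA : ∀ y, A y + y*A 1 = y*(1+y)*k := by
        intro y
        apply mul_left_cancel₀ hy0
        have h := hstar y0 y
        linear_combination h - y*(1+y)*(hdB y0) - y*(1+y)*(y0*(1+y0))*k*htwo
      have hk0 : k = 0 := by
        have h2 : k * (y0*(1+y0))^2 = 0 := by
          linear_combination (hdB (y0*y0)) - (hBm y0 y0) - 2*y0*(hdB y0) + k*y0^4*htwo
        have h3 : (y0*(1+y0))^2 ≠ 0 := pow_ne_zero 2 hy0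
        exact (mul_eq_zero.mp h2).resolve_right h3
      constructor
      · intro x; apply ct_eq; have h := hdA x; rw [hk0] at h
        linear_combination h
      · intro x; apply ct_eq; have h := hdB x; rw [hk0] at h
        linear_combination h
    · push_neg at hex
      have hall : ∀ x : K, x = 0 ∨ x = 1 := by
        intro x
        rcases mul_eq_zero.mp (hex x) with h | h
        · exact Or.inl h
        · right
          have h1 : x = -1 := eq_neg_of_add_eq_zero_right h
          rwa [CharTwo.neg_eq] at h1
      have hA0 : A 0 = 0 := by
        have h := hA 0 0
        simp only [add_zero] at h
        exact (right_eq_add.mp h)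
      have hB0 : B 0 = 0 := by
        have h := hB 0 0
        simp only [add_zero] at h
        exact (right_eq_add.mp h)
      constructor
      · intro x
        rcases hall x with h | h <;> subst h
        · simp [hA0]
        · simp
      · intro x
        rcases hall x with h | h <;> subst h
        · simp [hB0]
        · simp
  obtain ⟨hAl, hBl⟩ := hABlin
  refine ⟨hAl, hBl, ?_, ?_⟩
  · intro c x
    have hiv : α2 c = α1 c + c * B 1 + c * A 1 := by
      linear_combination -(h6 c) + hBl c - hAl c - c*A 1*htwo
    linear_combination h7 c x + x*hiv + x*(hAl (c*x)) - hBl (c*x)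
  · intro c
    linear_combination -(h6 c) + hBl c - hAl c - c*A 1*htwo
end ALG

open Matrix

section MAT
variable {K : Type*} [Field K] {n : ℕ}

private def Dm (i : Fin n) (x : K) : Matrix (Fin n) (Fin n) K := Matrix.single i i x

private def Sm (i j : Fin n) (x : K) : Matrix (Fin n) (Fin n) K :=
  Matrix.single i j x + Matrix.single j i x

private lemma std_transpose (i j : Fin n) (x : K) :
    (Matrix.single i j x)ᵀ = Matrix.single j i x := by
  ext k l
  simp [Matrix.single, Matrix.transpose_apply, and_comm]

private lemma Dm_isSymm (i : Fin n) (x : K) : (Dm i x).IsSymm := by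
  unfold Matrix.IsSymm Dm; rw [std_transpose]

private lemma Sm_isSymm (i j : Fin n) (x : K) : (Sm i j x).IsSymm := by
  unfold Matrix.IsSymm Sm; rw [Matrix.transpose_add, std_transpose, std_transpose, add_comm]

private lemma Sm_comm (i j : Fin n) (x : K) : Sm i j x = Sm j i x := add_comm _ _

private lemma std_mulVec (i j k : Fin n) (x : K) (w : Fin n → K) :
    (Matrix.single i j x).mulVec w k = if k = i then x * w j else 0 := by
  rw [Matrix.single_mulVec]
  simp [Function.update_apply]

private lemma Dm_mulVec (i k : Fin n) (x : K) (w : Fin n → K) :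
    (Dm i x).mulVec w k = if k = i then x * w i else 0 := std_mulVec i i k x w

private lemma Sm_mulVec (i j k : Fin n) (x : K) (w : Fin n → K) :
    (Sm i j x).mulVec w k = (if k = i then x * w j else 0) + (if k = j then x * w i else 0) := by
  unfold Sm
  rw [Matrix.add_mulVec, Pi.add_apply, std_mulVec, std_mulVec]

private lemma Dm_add (i : Fin n) (x y : K) : Dm i (x + y) = Dm i x + Dm i y :=
  Matrix.single_add _ _ _ _

private lemma Sm_add (i j : Fin n) (x y : K) : Sm i j (x + y) = Sm i j x + Sm i j y := by
  unfold Sm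
  rw [Matrix.single_add, Matrix.single_add]
  abel

private lemma Dm_apply (i k l : Fin n) (x : K) :
    Dm i x k l = if i = k ∧ i = l then x else 0 := rfl

private lemma Sm_apply (i j k l : Fin n) (x : K) :
    Sm i j x k l = (if i = k ∧ j = l then x else 0) + (if j = k ∧ i = l then x else 0) := rfl

end MAT

open Matrix

section MAIN
variable {K : Type*} [Field K] [CharP K 2] {n : ℕ}


theorem stmt_10' (hn : 2 ≤ n)
    (F : Matrix (Fin n) (Fin n) K → (Fin n → K))
    (hadd : ∀ M N : Matrix (Fin n) (Fin n) K, M.IsSymm → N.IsSymm → F (M + N) = F M + F N)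
    (hrc : ∀ M : Matrix (Fin n) (Fin n) K, M.IsSymm → F M ∈ Set.range M.mulVec) :
    ∃ (X : Fin n → K) (α : K → K),
      (∀ x y : K, α (x + y) = α x + α y) ∧
      (∀ l x : K, α (l ^ 2 * x) = l * α x) ∧
      ∀ M : Matrix (Fin n) (Fin n) K, M.IsSymm →
        F M = M.mulVec X + fun i => α (M i i) := by
  classical
  have htwo : (2:K) = 0 := CharTwo.two_eq_zero
  -- basic additivity facts
  have hF0 : F 0 = 0 := by
    have h := hadd 0 0 (Matrix.isSymm_zero) (Matrix.isSymm_zero)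
    simp only [add_zero] at h
    exact (right_eq_add.mp h)
  have hDadd : ∀ (i : Fin n) (x y : K), F (Dm i (x+y)) = F (Dm i x) + F (Dm i y) := by
    intro i x y
    rw [Dm_add]
    exact hadd _ _ (Dm_isSymm i x) (Dm_isSymm i y)
  have hSadd : ∀ (i j : Fin n) (x y : K), F (Sm i j (x+y)) = F (Sm i j x) + F (Sm i j y) := by
    intro i j x y
    rw [Sm_add]
    exact hadd _ _ (Sm_isSymm i j x) (Sm_isSymm i j y)
  -- zero components
  have hDzero : ∀ (i : Fin n) (x : K) (k : Fin n), k ≠ i → F (Dm i x) k = 0 := by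
    intro i x k hk
    obtain ⟨w, hw⟩ := hrc (Dm i x) (Dm_isSymm i x)
    rw [← hw, Dm_mulVec, if_neg hk]
  have hSzero : ∀ (i j : Fin n) (x : K) (k : Fin n), k ≠ i → k ≠ j → F (Sm i j x) k = 0 := by
    intro i j x k hki hkj
    obtain ⟨w, hw⟩ := hrc (Sm i j x) (Sm_isSymm i j x)
    rw [← hw, Sm_mulVec, if_neg hki, if_neg hkj, add_zero]
  -- the pair relation
  have hP : ∀ i j : Fin n, i ≠ j → ∀ c x y : K,
      y * (F (Dm i (c*x^2)) i + F (Sm i j (c*x*y)) i)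
        = x * (F (Dm j (c*y^2)) j + F (Sm i j (c*x*y)) j) := by
    intro i j hij c x y
    set M : Matrix (Fin n) (Fin n) K := Dm i (c*x^2) + Sm i j (c*x*y) + Dm j (c*y^2) with hM
    have hMsymm : M.IsSymm :=
      ((Dm_isSymm i (c*x^2)).add (Sm_isSymm i j (c*x*y))).add (Dm_isSymm j (c*y^2))
    obtain ⟨w, hw⟩ := hrc M hMsymm
    have hsum : F M = F (Dm i (c*x^2)) + F (Sm i j (c*x*y)) + F (Dm j (c*y^2)) := by
      rw [hM, hadd _ _ ((Dm_isSymm i (c*x^2)).add (Sm_isSymm i j (c*x*y))) (Dm_isSymm j (c*y^2)),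
        hadd _ _ (Dm_isSymm i (c*x^2)) (Sm_isSymm i j (c*x*y))]
    have h1 : F M i = F (Dm i (c*x^2)) i + F (Sm i j (c*x*y)) i := by
      rw [hsum]
      simp only [Pi.add_apply]
      rw [hDzero j (c*y^2) i hij, add_zero]
    have h2 : F M j = F (Dm j (c*y^2)) j + F (Sm i j (c*x*y)) j := by
      rw [hsum]
      simp only [Pi.add_apply]
      rw [hDzero i (c*x^2) j (Ne.symm hij)]
      ring
    have h3 : F M i = c*x^2 * w i + c*x*y * w j := by
      rw [← hw, hM]
      rw [Matrix.add_mulVec, Matrix.add_mulVec]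
      simp only [Pi.add_apply]
      rw [Dm_mulVec, Dm_mulVec, Sm_mulVec, if_pos rfl, if_pos rfl, if_neg hij, if_neg hij]
      ring
    have h4 : F M j = c*x*y * w i + c*y^2 * w j := by
      rw [← hw, hM]
      rw [Matrix.add_mulVec, Matrix.add_mulVec]
      simp only [Pi.add_apply]
      rw [Dm_mulVec, Dm_mulVec, Sm_mulVec, if_pos rfl, if_pos rfl,
        if_neg (Ne.symm hij), if_neg (Ne.symm hij)]
      ring
    rw [← h1, ← h2, h3, h4]
    ring
  -- the triple relation
  have hT : ∀ i j k : Fin n, i ≠ j → i ≠ k → j ≠ k →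
      F (Dm j 1) j + F (Sm i j 1) j + F (Sm j k 1) j
        = F (Dm k 1) k + F (Sm i k 1) k + F (Sm j k 1) k := by
    intro i j k hij hik hjk
    set M : Matrix (Fin n) (Fin n) K :=
      Dm i 1 + Dm j 1 + Dm k 1 + Sm i j 1 + Sm i k 1 + Sm j k 1 with hM
    have s1 := Dm_isSymm (K := K) i 1
    have s2 := Dm_isSymm (K := K) j 1
    have s3 := Dm_isSymm (K := K) k 1
    have s4 := Sm_isSymm (K := K) i j 1
    have s5 := Sm_isSymm (K := K) i k 1
    have s6 := Sm_isSymm (K := K) j k 1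
    have hMsymm : M.IsSymm := ((((s1.add s2).add s3).add s4).add s5).add s6
    obtain ⟨w, hw⟩ := hrc M hMsymm
    have hsum : F M = F (Dm i 1) + F (Dm j 1) + F (Dm k 1) + F (Sm i j 1)
        + F (Sm i k 1) + F (Sm j k 1) := by
      rw [hM]
      rw [hadd _ _ ((((s1.add s2).add s3).add s4).add s5) s6,
        hadd _ _ (((s1.add s2).add s3).add s4) s5,
        hadd _ _ ((s1.add s2).add s3) s4,
        hadd _ _ (s1.add s2) s3,
        hadd _ _ s1 s2]
    have h1 : F M j = F (Dm j 1) j + F (Sm i j 1) j + F (Sm j k 1) j := by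
      rw [hsum]
      simp only [Pi.add_apply]
      rw [hDzero i 1 j (Ne.symm hij), hDzero k 1 j hjk, hSzero i k 1 j (Ne.symm hij) hjk]
      ring
    have h2 : F M k = F (Dm k 1) k + F (Sm i k 1) k + F (Sm j k 1) k := by
      rw [hsum]
      simp only [Pi.add_apply]
      rw [hDzero i 1 k (Ne.symm hik), hDzero j 1 k (Ne.symm hjk), hSzero i j 1 k (Ne.symm hik) (Ne.symm hjk)]
      ring
    have h3 : F M j = 1 * w i + 1 * w j + 1 * w k := by
      rw [← hw, hM]
      simp only [Matrix.add_mulVec, Pi.add_apply]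
      rw [Dm_mulVec, Dm_mulVec, Dm_mulVec, Sm_mulVec, Sm_mulVec, Sm_mulVec]
      rw [if_neg (Ne.symm hij), if_pos rfl, if_neg hjk, if_neg (Ne.symm hij), if_pos rfl,
        if_neg (Ne.symm hij), if_neg hjk, if_pos rfl, if_neg hjk]
      ring
    have h4 : F M k = 1 * w i + 1 * w j + 1 * w k := by
      rw [← hw, hM]
      simp only [Matrix.add_mulVec, Pi.add_apply]
      rw [Dm_mulVec, Dm_mulVec, Dm_mulVec, Sm_mulVec, Sm_mulVec, Sm_mulVec]
      rw [if_neg (Ne.symm hik), if_neg (Ne.symm hjk), if_pos rfl, if_neg (Ne.symm hik),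
        if_neg (Ne.symm hjk), if_neg (Ne.symm hik), if_pos rfl, if_neg (Ne.symm hjk), if_pos rfl]
      ring
    rw [← h1, ← h2, h3, h4]
  -- componentwise additivity
  have haddD : ∀ i : Fin n, ∀ x y : K, F (Dm i (x+y)) i = F (Dm i x) i + F (Dm i y) i := by
    intro i x y; rw [hDadd i x y]; rfl
  have haddS : ∀ i j k : Fin n, ∀ x y : K,
      F (Sm i j (x+y)) k = F (Sm i j x) k + F (Sm i j y) k := by
    intro i j k x y; rw [hSadd i j x y]; rfl
  have halg : ∀ i j : Fin n, i ≠ j →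
      (∀ x, F (Sm i j x) j = x * F (Sm i j 1) j) ∧
      (∀ x, F (Sm i j x) i = x * F (Sm i j 1) i) ∧
      (∀ c x, F (Dm i (c * x^2)) i
        = x * F (Dm i c) i + c*x*F (Sm i j 1) j + c*x^2*F (Sm i j 1) j) ∧
      (∀ c, F (Dm j c) j = F (Dm i c) i + c * F (Sm i j 1) i + c * F (Sm i j 1) j) := by
    intro i j hij
    exact alg_main (fun x => F (Dm i x) i) (fun x => F (Dm j x) j)
      (fun x => F (Sm i j x) j) (fun x => F (Sm i j x) i)
      (haddD i) (haddD j) (haddS i j j) (haddS i j i) (hP i j hij)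
  -- two distinct indices
  obtain ⟨i0, i1, h01⟩ : ∃ a b : Fin n, a ≠ b := by
    refine ⟨⟨0, by omega⟩, ⟨1, by omega⟩, ?_⟩
    simp [Fin.ext_iff]
  obtain ⟨wit, hwit⟩ : ∃ w : Fin n → Fin n, ∀ i, w i ≠ i := by
    refine ⟨fun i => if i = i0 then i1 else i0, ?_⟩
    intro i
    by_cases h : i = i0
    · subst h; simp [h01.symm]
    · simp only [if_neg h]; exact fun he => h he.symm
  set X : Fin n → K := fun i => F (Sm i (wit i) 1) (wit i) with hXdef
  have hXwd : ∀ i j : Fin n, j ≠ i → F (Sm i j 1) j = X i := by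
    intro i j hji
    by_cases hjw : j = wit i
    · subst hjw; rfl
    · have t := hT i j (wit i) (Ne.symm hji) (Ne.symm (hwit i)) hjw
      have p := (halg j (wit i) hjw).2.2.2 1
      have hXi : X i = F (Sm i (wit i) 1) (wit i) := rfl
      rw [hXi]
      linear_combination t + p + (F (Sm j (wit i) 1) (wit i))*htwo
  set α : K → K := fun x => F (Dm i0 x) i0 + x * X i0 with hαdef
  have hα0 : α 0 = 0 := by
    have : Dm i0 (0:K) = 0 := Matrix.single_zero i0 i0
    simp [hαdef, this, hF0]
  have hαadd : ∀ x y : K, α (x + y) = α x + α y := by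
    intro x y
    simp only [hαdef]
    rw [haddD i0 x y]
    ring
  have hcons : ∀ (i : Fin n) (x : K), F (Dm i x) i = x * X i + α x := by
    intro i x
    by_cases h : i = i0
    · subst h
      simp only [hαdef]
      linear_combination (-(x * X i))*htwo
    · have hiv := (halg i0 i (fun he => h he.symm)).2.2.2 x
      have e1 : F (Sm i0 i 1) i = X i0 := hXwd i0 i h
      have e2 : F (Sm i0 i 1) i0 = X i := by
        rw [Sm_comm]; exact hXwd i i0 (fun he => h he.symm)
      rw [hiv, e1, e2]
      simp only [hαdef]
      ring
  have hroot : ∀ l x : K, α (l^2 * x) = l * α x := by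
    intro l x
    have h3 := (halg i0 (wit i0) (Ne.symm (hwit i0))).2.2.1 x l
    have e1 : F (Sm i0 (wit i0) 1) (wit i0) = X i0 := hXwd i0 (wit i0) (hwit i0)
    simp only [hαdef]
    rw [mul_comm (l^2) x, h3, e1]
    linear_combination (x*l^2*X i0)*htwo
  -- per-term final identities
  have hDfinal : ∀ (i : Fin n) (x : K),
      F (Dm i x) = (Dm i x).mulVec X + fun kk => α ((Dm i x) kk kk) := by
    intro i x
    funext k
    simp only [Pi.add_apply]
    by_cases h : k = i
    · subst h
      rw [hcons k x, Dm_mulVec, if_pos rfl, Dm_apply, if_pos ⟨rfl, rfl⟩]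
    · rw [hDzero i x k h, Dm_mulVec, if_neg h, Dm_apply,
        if_neg (fun hc => h hc.1.symm), hα0, add_zero]
  have hSfinal : ∀ (i j : Fin n), i ≠ j → ∀ x : K,
      F (Sm i j x) = (Sm i j x).mulVec X + fun kk => α ((Sm i j x) kk kk) := by
    intro i j hij x
    funext k
    simp only [Pi.add_apply]
    have hdiag : (Sm i j x) k k = 0 := by
      rw [Sm_apply, if_neg (fun hc => hij (hc.1.trans hc.2.symm)),
        if_neg (fun hc => hij (hc.2.trans hc.1.symm)), add_zero]
    rw [hdiag, hα0, add_zero]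
    by_cases hki : k = i
    · subst hki
      have e : F (Sm k j 1) k = X j := by
        rw [Sm_comm]; exact hXwd j k hij
      rw [(halg k j hij).2.1 x, e, Sm_mulVec, if_pos rfl, if_neg hij, add_zero]
    · by_cases hkj : k = j
      · subst hkj
        rw [(halg i k hij).1 x, hXwd i k (Ne.symm hij), Sm_mulVec,
          if_neg (fun hc => hij hc.symm), if_pos rfl, zero_add]
      · rw [hSzero i j x k hki hkj, Sm_mulVec, if_neg hki, if_neg hkj, add_zero]
  -- summation machinery
  have hsymm_sum : ∀ (s : Finset (Fin n × Fin n)) (g : Fin n × Fin n → Matrix (Fin n) (Fin n) K),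
      (∀ p ∈ s, (g p).IsSymm) → (∑ p ∈ s, g p).IsSymm := by
    intro s g h
    exact Finset.sum_induction g Matrix.IsSymm (fun a b ha hb => ha.add hb) Matrix.isSymm_zero h
  have hFsum : ∀ (s : Finset (Fin n × Fin n)) (g : Fin n × Fin n → Matrix (Fin n) (Fin n) K),
      (∀ p ∈ s, (g p).IsSymm) → F (∑ p ∈ s, g p) = ∑ p ∈ s, F (g p) := by
    intro s g
    induction s using Finset.cons_induction with
    | empty => intro _; simpa using hF0
    | cons a s ha ih =>
      intro hsym
      rw [Finset.sum_cons, Finset.sum_cons,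
        hadd _ _ (hsym a (Finset.mem_cons_self a s))
          (hsymm_sum s g (fun p hp => hsym p (Finset.mem_cons_of_mem hp))),
        ih (fun p hp => hsym p (Finset.mem_cons_of_mem hp))]
  -- conclusion
  refine ⟨X, α, hαadd, hroot, ?_⟩
  intro M hMsym
  set s : Finset (Fin n × Fin n) := Finset.univ.filter (fun p => p.1 ≤ p.2) with hs
  set T : Fin n × Fin n → Matrix (Fin n) (Fin n) K :=
    fun p => if p.1 = p.2 then Dm p.1 (M p.1 p.1) else Sm p.1 p.2 (M p.1 p.2) with hTdef
  have hTsym : ∀ p ∈ s, (T p).IsSymm := by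
    intro p _
    simp only [hTdef]
    split_ifs
    · exact Dm_isSymm _ _
    · exact Sm_isSymm _ _ _
  have hdec : M = ∑ p ∈ s, T p := by
    ext k l
    rw [Matrix.sum_apply]
    have hmem : ∀ a b : Fin n, a ≤ b → (a, b) ∈ s := by
      intro a b hab
      rw [hs]
      exact Finset.mem_filter.mpr ⟨Finset.mem_univ _, hab⟩
    rcases lt_trichotomy k l with hkl | hkl | hkl
    · rw [Finset.sum_eq_single (k, l)]
      · simp only [hTdef]
        rw [if_neg (ne_of_lt hkl : k ≠ l), Sm_apply, if_pos ⟨rfl, rfl⟩,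
          if_neg (fun hc => (ne_of_lt hkl) hc.2), add_zero]
      · rintro ⟨a, b⟩ hp hne
        have hab : a ≤ b := (Finset.mem_filter.mp hp).2
        simp only [hTdef]
        by_cases h : a = b
        · rw [if_pos h, Dm_apply]
          exact if_neg (fun hc => (ne_of_lt hkl) (hc.1.symm.trans hc.2))
        · rw [if_neg h, Sm_apply,
            if_neg (fun hc => hne (by rw [hc.1, hc.2])),
            if_neg (fun hc => absurd hab (by rw [hc.1, hc.2]; exact not_le.mpr hkl)), add_zero]
      · intro hm; exact absurd (hmem k l (le_of_lt hkl)) hm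
    · subst hkl
      rw [Finset.sum_eq_single (k, k)]
      · simp [hTdef, Dm_apply]
      · rintro ⟨a, b⟩ hp hne
        simp only [hTdef]
        by_cases h : a = b
        · rw [if_pos h, Dm_apply]
          exact if_neg (fun hc => hne (by rw [← h, hc.1]))
        · rw [if_neg h, Sm_apply,
            if_neg (fun hc => h (hc.1.trans hc.2.symm)),
            if_neg (fun hc => h (hc.2.trans hc.1.symm)), add_zero]
      · intro hm; exact absurd (hmem k k le_rfl) hm
    · rw [Finset.sum_eq_single (l, k)]
      · simp only [hTdef]
        rw [if_neg (ne_of_lt hkl : l ≠ k), Sm_apply,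
          if_neg (fun hc => (ne_of_lt hkl) hc.1), if_pos ⟨rfl, rfl⟩,
          zero_add]
        exact (hMsym.apply k l).symm
      · rintro ⟨a, b⟩ hp hne
        have hab : a ≤ b := (Finset.mem_filter.mp hp).2
        simp only [hTdef]
        by_cases h : a = b
        · rw [if_pos h, Dm_apply]
          exact if_neg (fun hc => (ne_of_lt hkl) (hc.2.symm.trans hc.1))
        · rw [if_neg h, Sm_apply,
            if_neg (fun hc => absurd hab (by rw [hc.1, hc.2]; exact not_le.mpr hkl)),
            if_neg (fun hc => hne (by rw [hc.1, hc.2])), add_zero]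
      · intro hm; exact absurd (hmem l k (le_of_lt hkl)) hm
  have hTval : ∀ p ∈ s, F (T p) = (T p).mulVec X + fun kk => α (T p kk kk) := by
    intro p hp
    simp only [hTdef]
    split_ifs with h
    · exact hDfinal p.1 (M p.1 p.1)
    · exact hSfinal p.1 p.2 h (M p.1 p.2)
  have φ1 : Matrix (Fin n) (Fin n) K →+ (Fin n → K) :=
    AddMonoidHom.mk' (fun N => N.mulVec X) (fun a b => Matrix.add_mulVec a b X)
  calc F M = F (∑ p ∈ s, T p) := by rw [← hdec]
    _ = ∑ p ∈ s, F (T p) := hFsum s T hTsym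
    _ = ∑ p ∈ s, ((T p).mulVec X + fun kk => α (T p kk kk)) := Finset.sum_congr rfl hTval
    _ = (∑ p ∈ s, (T p).mulVec X) + ∑ p ∈ s, (fun kk => α (T p kk kk)) :=
        Finset.sum_add_distrib
    _ = M.mulVec X + fun kk => α (M kk kk) := by
        congr 1
        · rw [hdec]
          exact (map_sum (AddMonoidHom.mk' (fun N : Matrix (Fin n) (Fin n) K => N.mulVec X)
            (fun a b => Matrix.add_mulVec a b X)) T s).symm
        · funext kk
          rw [Finset.sum_apply]
          calc (∑ p ∈ s, α (T p kk kk))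
              = α (∑ p ∈ s, T p kk kk) :=
                (map_sum (AddMonoidHom.mk' α (fun a b => hαadd a b)) (fun p => T p kk kk) s).symm
            _ = α (M kk kk) := by rw [← Matrix.sum_apply, ← hdec]



end MAIN

theorem stmt_10 {K : Type*} [Field K] [CharP K 2] (n : ℕ) (hn : 2 ≤ n)
    (F : Matrix (Fin n) (Fin n) K → (Fin n → K))
    (hadd : ∀ M N : Matrix (Fin n) (Fin n) K, M.IsSymm → N.IsSymm → F (M + N) = F M + F N)
    (hrc : ∀ M : Matrix (Fin n) (Fin n) K, M.IsSymm → F M ∈ Set.range M.mulVec) :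
    ∃ (X : Fin n → K) (α : K → K),
      (∀ x y : K, α (x + y) = α x + α y) ∧
      (∀ l x : K, α (l ^ 2 * x) = l * α x) ∧
      ∀ M : Matrix (Fin n) (Fin n) K, M.IsSymm →
        F M = M.mulVec X + fun i => α (M i i) := by
  exact stmt_10' hn F hadd hrc
end

section
/- Let K be a field with more than 2 elements and n ≥ 2. Every range-compatible K-linear map F : Sym_n(K) → K^n is local: there exists X ∈ K^n with F(M) = MX for all symmetric n×n matrices M. -/
open Matrix

section aux
variable {K : Type*} [Field K] {n : ℕ}

/-- standard basis vector -/
noncomputable def ee (n : ℕ) (K : Type*) [Field K] (i : Fin n) : Fin n → K := Pi.single i 1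

lemma ee_apply (i k : Fin n) : ee n K i k = if k = i then 1 else 0 := Pi.single_apply i 1 k

lemma ee_dot (i : Fin n) (w : Fin n → K) : ee n K i ⬝ᵥ w = w i := by
  simp [dotProduct, ee_apply]

noncomputable def DD (i : Fin n) : Matrix (Fin n) (Fin n) K :=
  vecMulVec (ee n K i) (ee n K i)

noncomputable def SS (i j : Fin n) : Matrix (Fin n) (Fin n) K :=
  vecMulVec (ee n K i) (ee n K j) + vecMulVec (ee n K j) (ee n K i)

lemma vecMulVec_isSymm (v : Fin n → K) : (vecMulVec v v).IsSymm := by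
  ext i j; simp [Matrix.transpose_apply, vecMulVec_apply, mul_comm]

lemma DD_isSymm (i : Fin n) : (DD i : Matrix (Fin n) (Fin n) K).IsSymm := vecMulVec_isSymm _

lemma SS_isSymm (i j : Fin n) : (SS i j : Matrix (Fin n) (Fin n) K).IsSymm := by
  ext k l; simp [SS, Matrix.transpose_apply, vecMulVec_apply]; ring

lemma vecMulVec_mulVec' (u v w : Fin n → K) :
    (vecMulVec u v).mulVec w = (v ⬝ᵥ w) • u := by
  ext k
  simp [Matrix.mulVec, dotProduct, vecMulVec_apply, Finset.mul_sum, mul_comm, mul_assoc,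
    mul_left_comm]

lemma sym_decomp (M : Matrix (Fin n) (Fin n) K) (hM : M.IsSymm) :
    M = (∑ i, M i i • DD i) +
      ∑ p ∈ Finset.univ.filter (fun p : Fin n × Fin n => p.1 < p.2), M p.1 p.2 • SS p.1 p.2 := by
  ext k l
  have hMs : ∀ a b : Fin n, M a b = M b a := fun a b => (Matrix.IsSymm.apply hM b a)
  rw [Matrix.add_apply, Matrix.sum_apply, Matrix.sum_apply]
  have h1 : ∑ i, (M i i • DD i) k l = if l = k then M k k else 0 := by
    rw [Finset.sum_eq_single k]
    · simp [DD, vecMulVec_apply, ee_apply]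
    · intro b _ hb
      simp [DD, vecMulVec_apply, ee_apply, Ne.symm hb]
    · simp
  rw [h1]
  rcases lt_trichotomy k l with hkl | hkl | hkl
  · rw [Finset.sum_eq_single_of_mem (⟨k, l⟩ : Fin n × Fin n)
      (by simp [Finset.mem_filter, hkl])]
    · simp [SS, vecMulVec_apply, ee_apply, hkl.ne, hkl.ne']
    · intro p hp hpne
      simp only [Finset.mem_filter, Finset.mem_univ, true_and] at hp
      simp only [Matrix.smul_apply, SS, Matrix.add_apply, vecMulVec_apply, ee_apply,
        smul_eq_mul]
      by_cases h1 : k = p.1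
      · by_cases h2 : l = p.2
        · exact absurd (Prod.ext h1.symm h2.symm) hpne
        · have h3 : ¬ k = p.2 := by
            intro h; exact absurd (h1 ▸ h ▸ hp) (lt_irrefl _)
          simp [h2, h3]
      · by_cases h3 : k = p.2
        · have h4 : ¬ l = p.1 := by
            intro h; exact absurd hkl (by rw [h, h3]; exact not_lt.mpr hp.le)
          simp [h1, h4]
        · simp [h1, h3]
  · rw [Finset.sum_eq_zero]
    · simp [hkl]
    · intro p hp
      simp only [Finset.mem_filter, Finset.mem_univ, true_and] at hp
      simp only [Matrix.smul_apply, SS, Matrix.add_apply, vecMulVec_apply, ee_apply,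
        smul_eq_mul]
      by_cases h1 : k = p.1
      · have h2 : ¬ l = p.2 := by
          intro h; rw [← h1, ← h, hkl] at hp; exact lt_irrefl _ hp
        have h3 : ¬ k = p.2 := by
          intro h; rw [← h1, ← h] at hp; exact lt_irrefl _ hp
        simp [h2, h3]
      · have h5 : ¬ l = p.1 := fun h => h1 (hkl.trans h)
        simp [h1, h5]
  · rw [Finset.sum_eq_single_of_mem (⟨l, k⟩ : Fin n × Fin n)
      (by simp [Finset.mem_filter, hkl])]
    · simp [SS, vecMulVec_apply, ee_apply, hkl.ne, hkl.ne', hMs k l]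
    · intro p hp hpne
      simp only [Finset.mem_filter, Finset.mem_univ, true_and] at hp
      simp only [Matrix.smul_apply, SS, Matrix.add_apply, vecMulVec_apply, ee_apply,
        smul_eq_mul]
      by_cases h1 : k = p.1
      · have h2 : ¬ l = p.2 := by
          intro h; exact absurd hkl (by rw [h1, h]; exact not_lt.mpr hp.le)
        have h3 : ¬ k = p.2 := by
          intro h; exact absurd (h1 ▸ h ▸ hp) (lt_irrefl _)
        simp [h2, h3]
      · by_cases h3 : k = p.2
        · by_cases h4 : l = p.1
          · exact absurd (Prod.ext h4.symm h3.symm) hpne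
          · simp [h1, h4]
        · simp [h1, h3]

end aux

theorem stmt_12 {K : Type*} [Field K] (hK : 2 < Cardinal.mk K) (n : ℕ) (hn : 2 ≤ n)
    (F : Matrix (Fin n) (Fin n) K → (Fin n → K))
    (hadd : ∀ M N : Matrix (Fin n) (Fin n) K, M.IsSymm → N.IsSymm → F (M + N) = F M + F N)
    (hsmul : ∀ (c : K) (M : Matrix (Fin n) (Fin n) K), M.IsSymm → F (c • M) = c • F M)
    (hrc : ∀ M : Matrix (Fin n) (Fin n) K, M.IsSymm → F M ∈ Set.range M.mulVec) :
    ∃ X : Fin n → K, ∀ M : Matrix (Fin n) (Fin n) K, M.IsSymm → F M = M.mulVec X := by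
  classical
  have hF0 : F 0 = 0 := by
    have := hsmul 0 0 (by simp [Matrix.IsSymm])
    simpa using this
  -- the scalar function lam
  have hex : ∀ v : Fin n → K, ∃ c : K, F (vecMulVec v v) = c • v := by
    intro v
    obtain ⟨w, hw⟩ := hrc _ (vecMulVec_isSymm v)
    exact ⟨v ⬝ᵥ w, by rw [← hw, vecMulVec_mulVec']⟩
  choose lam hlam using hex
  -- a scalar different from 0 and 1
  obtain ⟨c₀, hc0, hc1⟩ : ∃ c : K, c ≠ 0 ∧ c ≠ 1 := by
    by_contra h
    push_neg at h
    have huniv : (Set.univ : Set K) = {0, 1} := by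
      ext x; simp only [Set.mem_univ, Set.mem_insert_iff, Set.mem_singleton_iff, true_iff]
      by_cases hx : x = 0
      · exact Or.inl hx
      · exact Or.inr (h x hx)
    have h2 : Cardinal.mk K ≤ 2 := by
      calc Cardinal.mk K = Cardinal.mk (Set.univ : Set K) := Cardinal.mk_univ.symm
      _ = Cardinal.mk ({0, 1} : Set K) := by rw [huniv]
      _ ≤ Cardinal.mk ({1} : Set K) + 1 := Cardinal.mk_insert_le
      _ = 2 := by rw [Cardinal.mk_singleton]; norm_num
    exact absurd hK (not_lt.mpr h2)
  -- key computation for off-diagonal basis matrices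
  have hkey : ∀ i j : Fin n, i ≠ j →
      F (SS i j) = lam (ee n K j) • ee n K i + lam (ee n K i) • ee n K j := by
    intro i j hij
    obtain ⟨w, hw⟩ := hrc (SS i j) (SS_isSymm i j)
    set a := ee n K j ⬝ᵥ w with ha
    set b := ee n K i ⬝ᵥ w with hb
    have hFS : F (SS i j) = a • ee n K i + b • ee n K j := by
      rw [← hw]
      simp [SS, Matrix.add_mulVec, vecMulVec_mulVec', ha, hb]
    have key : ∀ c : K, c ≠ 0 → lam (ee n K i) + c * a = c * lam (ee n K j) + b := by
      intro c hc
      set vv := ee n K i + c • ee n K j with hvv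
      have hdecomp : vecMulVec vv vv = (DD i + (c * c) • DD j) + c • SS i j := by
        ext k l
        simp only [hvv, DD, SS, vecMulVec_apply, Matrix.add_apply, Matrix.smul_apply,
          Pi.add_apply, Pi.smul_apply, smul_eq_mul]
        ring
      have hFvv : F (vecMulVec vv vv) =
          lam (ee n K i) • ee n K i + (c * c) • (lam (ee n K j) • ee n K j)
            + c • (a • ee n K i + b • ee n K j) := by
        rw [hdecomp, hadd _ _ ((DD_isSymm i).add ((DD_isSymm j).smul _)) ((SS_isSymm i j).smul _),
          hadd _ _ (DD_isSymm i) ((DD_isSymm j).smul _), hsmul _ _ (DD_isSymm j),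
          hsmul _ _ (SS_isSymm i j), hFS]
        rw [show (DD i : Matrix (Fin n) (Fin n) K) = vecMulVec (ee n K i) (ee n K i) from rfl,
          show (DD j : Matrix (Fin n) (Fin n) K) = vecMulVec (ee n K j) (ee n K j) from rfl,
          hlam, hlam]
      have hFvv' : F (vecMulVec vv vv) = lam vv • vv := hlam vv
      have heq := hFvv'.symm.trans hFvv
      have hii := congrFun heq i
      have hjj := congrFun heq j
      simp only [hvv, Pi.add_apply, Pi.smul_apply, smul_eq_mul, ee_apply, if_pos rfl,
        if_neg hij, if_neg (Ne.symm hij), if_true] at hii hjj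
      have hLi : lam vv = lam (ee n K i) + c * a := by linear_combination hii
      have hLj : c * lam vv = c * (c * lam (ee n K j) + b) := by linear_combination hjj
      have hLj' := mul_left_cancel₀ hc hLj
      exact hLi.symm.trans hLj'
    have k1 := key 1 one_ne_zero
    have k2 := key c₀ hc0
    have haa : a = lam (ee n K j) := by
      have hsub : (c₀ - 1) * (a - lam (ee n K j)) = 0 := by linear_combination k2 - k1
      rcases mul_eq_zero.mp hsub with h | h
      · exact absurd (sub_eq_zero.mp h) hc1
      · exact sub_eq_zero.mp h
    have hbb : b = lam (ee n K i) := by linear_combination haa - k1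
    rw [hFS, haa, hbb]
  -- additivity over finite sums
  have hFsum : ∀ {ι : Type} (s : Finset ι) (f : ι → Matrix (Fin n) (Fin n) K),
      (∀ x, (f x).IsSymm) →
      (∑ x ∈ s, f x).IsSymm ∧ F (∑ x ∈ s, f x) = ∑ x ∈ s, F (f x) := by
    intro ι s f hf
    induction s using Finset.cons_induction with
    | empty => exact ⟨by simp [Matrix.IsSymm], by simp [hF0]⟩
    | cons a s ha ih =>
      rw [Finset.sum_cons, Finset.sum_cons]
      exact ⟨(hf a).add ih.1, by rw [hadd _ _ (hf a) ih.1, ih.2]⟩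
  have hmvsum : ∀ {ι : Type} (s : Finset ι) (f : ι → Matrix (Fin n) (Fin n) K) (X : Fin n → K),
      (∑ x ∈ s, f x).mulVec X = ∑ x ∈ s, (f x).mulVec X := by
    intro ι s f X
    induction s using Finset.cons_induction with
    | empty => simp
    | cons a s ha ih => rw [Finset.sum_cons, Finset.sum_cons, Matrix.add_mulVec, ih]
  set X : Fin n → K := fun k => lam (ee n K k) with hX
  refine ⟨X, ?_⟩
  intro M hM
  have hDX : ∀ i, F (DD i) = (DD i : Matrix (Fin n) (Fin n) K).mulVec X := by
    intro i
    rw [show (DD i : Matrix (Fin n) (Fin n) K) = vecMulVec (ee n K i) (ee n K i) from rfl,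
      hlam, vecMulVec_mulVec', ee_dot]
  have hSX : ∀ i j, i ≠ j → F (SS i j) = (SS i j : Matrix (Fin n) (Fin n) K).mulVec X := by
    intro i j hij
    rw [hkey i j hij,
      show (SS i j : Matrix (Fin n) (Fin n) K)
        = vecMulVec (ee n K i) (ee n K j) + vecMulVec (ee n K j) (ee n K i) from rfl,
      Matrix.add_mulVec, vecMulVec_mulVec', vecMulVec_mulVec', ee_dot, ee_dot]
  have hdec := sym_decomp M hM
  set offd := Finset.univ.filter (fun p : Fin n × Fin n => p.1 < p.2) with hoffd
  have h1 := hFsum Finset.univ (fun i => M i i • DD i) (fun i => (DD_isSymm i).smul _)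
  have h2 := hFsum offd (fun p => M p.1 p.2 • SS p.1 p.2) (fun p => (SS_isSymm p.1 p.2).smul _)
  calc F M = F ((∑ i, M i i • DD i) + ∑ p ∈ offd, M p.1 p.2 • SS p.1 p.2) := by rw [← hdec]
  _ = (∑ i, F (M i i • DD i)) + ∑ p ∈ offd, F (M p.1 p.2 • SS p.1 p.2) := by
      rw [hadd _ _ h1.1 h2.1, h1.2, h2.2]
  _ = (∑ i, (M i i • DD i).mulVec X) + ∑ p ∈ offd, (M p.1 p.2 • SS p.1 p.2).mulVec X := by
      congr 1
      · refine Finset.sum_congr rfl fun i _ => ?_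
        rw [hsmul _ _ (DD_isSymm i), hDX i, ← Matrix.smul_mulVec]
      · refine Finset.sum_congr rfl fun p hp => ?_
        have hne : p.1 ≠ p.2 := by
          simp only [hoffd, Finset.mem_filter, Finset.mem_univ, true_and] at hp
          exact ne_of_lt hp
        rw [hsmul _ _ (SS_isSymm p.1 p.2), hSX _ _ hne, ← Matrix.smul_mulVec]
  _ = (((∑ i, M i i • DD i) + ∑ p ∈ offd, M p.1 p.2 • SS p.1 p.2 :
        Matrix (Fin n) (Fin n) K)).mulVec X := by
      rw [Matrix.add_mulVec, hmvsum, hmvsum]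
  _ = M.mulVec X := by rw [← hdec]
end

section
/- Let q be a nonzero quadratic form on a finite-dimensional vector space V over F_2 with dim V = n. Then the set q⁻¹({1}) is not contained in any linear subspace of V of dimension n − 2. -/
theorem stmt_13 {V : Type*} [AddCommGroup V] [Module (ZMod 2) V]
    [FiniteDimensional (ZMod 2) V]
    (q : QuadraticForm (ZMod 2) V) (hq : q ≠ 0)
    (W : Submodule (ZMod 2) V)
    (hW : Module.finrank (ZMod 2) W = Module.finrank (ZMod 2) V - 2) :
    ¬ (∀ x : V, q x = 1 → x ∈ W) := by
  intro h
  have two : ∀ a : ZMod 2, a ≠ 0 → a = 1 := by decide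
  have key : ∀ x : V, x ∉ W → q x = 0 := by
    intro x hx
    by_contra hqx
    exact hx (h x (two _ hqx))
  -- q is nonzero somewhere, giving a nonzero element of W
  obtain ⟨x, hx⟩ : ∃ x, q x ≠ 0 := by
    by_contra hc; push_neg at hc
    exact hq (QuadraticMap.ext hc)
  have hxW : x ∈ W := h x (two _ hx)
  have hx0 : x ≠ 0 := by rintro rfl; simp at hx
  have hWbot : W ≠ ⊥ := by
    rintro rfl
    exact hx0 (Submodule.mem_bot _ |>.mp hxW)
  have hWpos : Module.finrank (ZMod 2) W ≠ 0 := by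
    intro h0
    exact hWbot (Submodule.finrank_eq_zero.mp h0)
  have hsum := Submodule.finrank_quotient_add_finrank W
  have hQ2 : Module.finrank (ZMod 2) (V ⧸ W) = 2 := by omega
  -- basis of the quotient
  let b := Module.finBasisOfFinrankEq (ZMod 2) (V ⧸ W) hQ2
  obtain ⟨u1, hu1⟩ := Submodule.mkQ_surjective W (b 0)
  obtain ⟨u2, hu2⟩ := Submodule.mkQ_surjective W (b 1)
  have hu1W : u1 ∉ W := by
    intro hm
    have : W.mkQ u1 = 0 := (Submodule.Quotient.mk_eq_zero W).mpr hm
    rw [hu1] at this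
    exact b.ne_zero 0 this
  have hu2W : u2 ∉ W := by
    intro hm
    have : W.mkQ u2 = 0 := (Submodule.Quotient.mk_eq_zero W).mpr hm
    rw [hu2] at this
    exact b.ne_zero 1 this
  have hu12W : u1 + u2 ∉ W := by
    intro hm
    have h0 : W.mkQ (u1 + u2) = 0 := (Submodule.Quotient.mk_eq_zero W).mpr hm
    rw [map_add, hu1, hu2] at h0
    have := congrArg (fun z => b.repr z 0) h0
    simp [Module.Basis.repr_self, Finsupp.single_apply] at this
  -- q vanishes on W too
  have keyW : ∀ w ∈ W, q w = 0 := by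
    intro w hw
    have hp : ∀ u : V, u ∉ W → QuadraticMap.polar q w u = q w := by
      intro u hu
      have h1 : q (w + u) = 0 := key _ (fun hm => hu ((W.add_mem_iff_right hw).mp hm))
      have h2 : q u = 0 := key _ hu
      have hneg : ∀ a : ZMod 2, -a = a := by decide
      simp [QuadraticMap.polar, h1, h2, hneg]
    have hadd : QuadraticMap.polar q w (u1 + u2)
        = QuadraticMap.polar q w u1 + QuadraticMap.polar q w u2 :=
      QuadraticMap.polar_add_right q w u1 u2
    rw [hp _ hu1W, hp _ hu2W, hp _ hu12W] at hadd
    have htwo : ∀ a : ZMod 2, a = a + a → a = 0 := by decide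
    exact htwo _ hadd
  have : q = 0 := by
    ext v
    by_cases hv : v ∈ W
    · simpa using keyW v hv
    · simpa using key v hv
  exact hq this
end

section
/- Let K be a field, and define K₃ := { [[a,0],[0,b],[c,c]] : a,b,c ∈ K } ⊂ Mat_{3,2}(K). Then every range-compatible group homomorphism F : K₃ → K^3 is local: there exists X ∈ K^2 with F(M) = MX for all M ∈ K₃. -/
theorem stmt_15 {K : Type*} [Field K]
    (F : Matrix (Fin 3) (Fin 2) K → (Fin 3 → K))
    (hadd : ∀ M N : Matrix (Fin 3) (Fin 2) K,
      (∃ a b c : K, M = !![a, 0; 0, b; c, c]) →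
      (∃ a b c : K, N = !![a, 0; 0, b; c, c]) →
      F (M + N) = F M + F N)
    (hrc : ∀ M : Matrix (Fin 3) (Fin 2) K,
      (∃ a b c : K, M = !![a, 0; 0, b; c, c]) → F M ∈ Set.range M.mulVec) :
    ∃ X : Fin 2 → K, ∀ M : Matrix (Fin 3) (Fin 2) K,
      (∃ a b c : K, M = !![a, 0; 0, b; c, c]) → F M = M.mulVec X := by
  classical
  have hsplit : ∀ a b c : K,
      F !![a,0;0,b;c,c] = F !![a,0;0,0;0,0] + F !![0,0;0,b;0,0] + F !![0,0;0,0;c,c] := by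
    intro a b c
    have h1 : F (!![a,(0:K);0,0;0,0] + !![0,0;0,b;0,0])
        = F !![a,0;0,0;0,0] + F !![0,0;0,b;0,0] :=
      hadd _ _ ⟨a,0,0,rfl⟩ ⟨0,b,0,rfl⟩
    have e1 : !![a,(0:K);0,0;0,0] + !![0,0;0,b;0,0] = !![a,0;0,b;0,0] := by
      ext i j
      fin_cases i <;> fin_cases j <;>
        simp [Matrix.vecHead, Matrix.vecTail]
    have h2 : F (!![a,(0:K);0,b;0,0] + !![0,0;0,0;c,c])
        = F !![a,0;0,b;0,0] + F !![0,0;0,0;c,c] :=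
      hadd _ _ ⟨a,b,0,rfl⟩ ⟨0,0,c,rfl⟩
    have e2 : !![a,(0:K);0,b;0,0] + !![0,0;0,0;c,c] = !![a,0;0,b;c,c] := by
      ext i j
      fin_cases i <;> fin_cases j <;>
        simp [Matrix.vecHead, Matrix.vecTail]
    rw [e1] at h1
    rw [e2] at h2
    rw [h2, h1]
  have hg : ∀ a : K, ∃ x : K, F !![a,0;0,0;0,0] = ![a*x, 0, 0] := by
    intro a
    obtain ⟨v, hv⟩ := hrc !![a,0;0,0;0,0] ⟨a,0,0,rfl⟩
    refine ⟨v 0, ?_⟩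
    rw [← hv]
    ext i
    fin_cases i <;>
      simp [Matrix.mulVec, dotProduct, Fin.sum_univ_two,
        Matrix.vecHead, Matrix.vecTail]
  have hh : ∀ b : K, ∃ y : K, F !![0,0;0,b;0,0] = ![0, b*y, 0] := by
    intro b
    obtain ⟨v, hv⟩ := hrc !![0,0;0,b;0,0] ⟨0,b,0,rfl⟩
    refine ⟨v 1, ?_⟩
    rw [← hv]
    ext i
    fin_cases i <;>
      simp [Matrix.mulVec, dotProduct, Fin.sum_univ_two,
        Matrix.vecHead, Matrix.vecTail]
  have hk : ∀ c : K, ∃ z : K, F !![0,0;0,0;c,c] = ![0, 0, c*z] := by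
    intro c
    obtain ⟨v, hv⟩ := hrc !![0,0;0,0;c,c] ⟨0,0,c,rfl⟩
    refine ⟨v 0 + v 1, ?_⟩
    rw [← hv]
    ext i
    fin_cases i <;>
      simp [Matrix.mulVec, dotProduct, Fin.sum_univ_two,
        Matrix.vecHead, Matrix.vecTail, mul_add]
  have hcomp : ∀ a b c : K, F !![a,0;0,b;c,c]
      = ![F !![a,0;0,0;0,0] 0, F !![0,0;0,b;0,0] 1, F !![0,0;0,0;c,c] 2] := by
    intro a b c
    obtain ⟨x, hx⟩ := hg a
    obtain ⟨y, hy⟩ := hh b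
    obtain ⟨z, hz⟩ := hk c
    rw [hsplit a b c, hx, hy, hz]
    ext i
    fin_cases i <;> simp [Matrix.vecHead, Matrix.vecTail]
  have key : ∀ a b c : K, ∃ v : Fin 2 → K,
      F !![a,0;0,0;0,0] 0 = a * v 0 ∧ F !![0,0;0,b;0,0] 1 = b * v 1 ∧
      F !![0,0;0,0;c,c] 2 = c * v 0 + c * v 1 := by
    intro a b c
    obtain ⟨v, hv⟩ := hrc !![a,0;0,b;c,c] ⟨a,b,c,rfl⟩
    have h0 := congrFun hv 0
    have h1 := congrFun hv 1
    have h2 := congrFun hv 2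
    rw [hcomp a b c] at h0 h1 h2
    simp [Matrix.mulVec, dotProduct, Fin.sum_univ_two,
      Matrix.vecHead, Matrix.vecTail] at h0 h1 h2
    exact ⟨v, by linear_combination -h0, by linear_combination -h1,
      by linear_combination -h2⟩
  obtain ⟨w, hw1, hw2, hw3⟩ := key (1:K) 1 1
  simp only [one_mul] at hw1 hw2 hw3
  have hga : ∀ a : K, F !![a,0;0,0;0,0] 0 = a * F !![(1:K),0;0,0;0,0] 0 := by
    intro a
    obtain ⟨v, h1, h2, h3⟩ := key a 1 1
    simp only [one_mul] at h2 h3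
    have hv0 : v 0 = w 0 := by linear_combination hw3 - h3 + h2 - hw2
    rw [h1, hv0, ← hw1]
  have hhb : ∀ b : K, F !![0,0;0,b;0,0] 1 = b * F !![(0:K),0;0,1;0,0] 1 := by
    intro b
    obtain ⟨v, h1, h2, h3⟩ := key 1 b 1
    simp only [one_mul] at h1 h3
    have hv1 : v 1 = w 1 := by linear_combination hw3 - h3 + h1 - hw1
    rw [h2, hv1, ← hw2]
  have hkc : ∀ c : K, F !![0,0;0,0;c,c] 2
      = c * F !![(1:K),0;0,0;0,0] 0 + c * F !![(0:K),0;0,1;0,0] 1 := by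
    intro c
    obtain ⟨v, h1, h2, h3⟩ := key 1 1 c
    simp only [one_mul] at h1 h2
    rw [h3, h1, h2]
  refine ⟨![F !![(1:K),0;0,0;0,0] 0, F !![(0:K),0;0,1;0,0] 1], ?_⟩
  rintro M ⟨a, b, c, rfl⟩
  rw [hcomp a b c, hga a, hhb b, hkc c]
  ext i
  fin_cases i <;>
    simp [Matrix.mulVec, dotProduct, Fin.sum_univ_two,
      Matrix.vecHead, Matrix.vecTail]
end

section
/- Let K be a field, and define K₄ := { [[b,c],[a,0],[0,a]] : a,b,c ∈ K } ⊂ Mat_{3,2}(K). Then every range-compatible group homomorphism F : K₄ → K^3 is local. -/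
theorem stmt_16 {K : Type*} [Field K]
    (F : Matrix (Fin 3) (Fin 2) K → (Fin 3 → K))
    (hadd : ∀ M N : Matrix (Fin 3) (Fin 2) K,
      (∃ a b c : K, M = !![b, c; a, 0; 0, a]) →
      (∃ a b c : K, N = !![b, c; a, 0; 0, a]) →
      F (M + N) = F M + F N)
    (hrc : ∀ M : Matrix (Fin 3) (Fin 2) K,
      (∃ a b c : K, M = !![b, c; a, 0; 0, a]) → F M ∈ Set.range M.mulVec) :
    ∃ X : Fin 2 → K, ∀ M : Matrix (Fin 3) (Fin 2) K,
      (∃ a b c : K, M = !![b, c; a, 0; 0, a]) → F M = M.mulVec X := by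
  set Mk : K → K → K → Matrix (Fin 3) (Fin 2) K := fun a b c => !![b, c; a, 0; 0, a] with hMk
  have hmem : ∀ a b c : K, ∃ a' b' c' : K, Mk a b c = !![b', c'; a', 0; 0, a'] :=
    fun a b c => ⟨a, b, c, rfl⟩
  have hsum : ∀ a b c a' b' c' : K, Mk a b c + Mk a' b' c' = Mk (a+a') (b+b') (c+c') := by
    intro a b c a' b' c'
    ext i j
    fin_cases i <;> fin_cases j <;> simp [Mk]
  have hAdd : ∀ a b c a' b' c' : K,
      F (Mk (a+a') (b+b') (c+c')) = F (Mk a b c) + F (Mk a' b' c') := by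
    intro a b c a' b' c'
    rw [← hsum]
    exact hadd _ _ (hmem a b c) (hmem a' b' c')
  have hmv : ∀ (a b c : K) (v : Fin 2 → K),
      (Mk a b c).mulVec v = ![b * v 0 + c * v 1, a * v 0, a * v 1] := by
    intro a b c v
    ext i
    fin_cases i <;>
      simp [Mk, Matrix.mulVec, dotProduct, Fin.sum_univ_two]
  have hr : ∀ a b c : K, ∃ v : Fin 2 → K,
      F (Mk a b c) = ![b * v 0 + c * v 1, a * v 0, a * v 1] := by
    intro a b c
    obtain ⟨v, hv⟩ := hrc (Mk a b c) (hmem a b c)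
    exact ⟨v, by rw [← hv, hmv]⟩
  set x₀ := F (Mk 1 0 0) 1 with hx₀
  set y₀ := F (Mk 1 0 0) 2 with hy₀
  have hA0 : ∀ a : K, F (Mk a 0 0) 0 = 0 := by
    intro a
    obtain ⟨v, hv⟩ := hr a 0 0
    simpa using congrFun hv 0
  have hB1 : ∀ b : K, F (Mk 0 b 0) 1 = 0 := by
    intro b
    obtain ⟨v, hv⟩ := hr 0 b 0
    simpa using congrFun hv 1
  have hB2 : ∀ b : K, F (Mk 0 b 0) 2 = 0 := by
    intro b
    obtain ⟨v, hv⟩ := hr 0 b 0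
    simpa using congrFun hv 2
  have hC1 : ∀ c : K, F (Mk 0 0 c) 1 = 0 := by
    intro c
    obtain ⟨v, hv⟩ := hr 0 0 c
    simpa using congrFun hv 1
  have hC2 : ∀ c : K, F (Mk 0 0 c) 2 = 0 := by
    intro c
    obtain ⟨v, hv⟩ := hr 0 0 c
    simpa using congrFun hv 2
  have hHb : ∀ b : K, F (Mk 0 b 0) 0 = b * x₀ := by
    intro b
    obtain ⟨v, hv⟩ := hr 1 b 0
    have hs : F (Mk 1 b 0) = F (Mk 1 0 0) + F (Mk 0 b 0) := by
      have := hAdd 1 0 0 0 b 0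
      simpa using this
    rw [hs] at hv
    have h0 := congrFun hv 0
    have h1 := congrFun hv 1
    simp [hA0, hB1] at h0 h1
    rw [h0]
    rw [← hx₀] at h1
    rw [h1]
  have hKc : ∀ c : K, F (Mk 0 0 c) 0 = c * y₀ := by
    intro c
    obtain ⟨v, hv⟩ := hr 1 0 c
    have hs : F (Mk 1 0 c) = F (Mk 1 0 0) + F (Mk 0 0 c) := by
      have := hAdd 1 0 0 0 0 c
      simpa using this
    rw [hs] at hv
    have h0 := congrFun hv 0
    have h2 := congrFun hv 2
    simp [hA0, hC2] at h0 h2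
    rw [h0]
    rw [← hy₀] at h2
    rw [h2]
  have hG1 : ∀ a : K, F (Mk a 0 0) 1 = a * x₀ := by
    intro a
    obtain ⟨v, hv⟩ := hr a 1 0
    have hs : F (Mk a 1 0) = F (Mk a 0 0) + F (Mk 0 1 0) := by
      have := hAdd a 0 0 0 1 0
      simpa using this
    rw [hs] at hv
    have h0 := congrFun hv 0
    have h1 := congrFun hv 1
    simp [hA0, hB1, hHb] at h0 h1
    rw [h1, ← h0]
  have hG2 : ∀ a : K, F (Mk a 0 0) 2 = a * y₀ := by
    intro a
    obtain ⟨v, hv⟩ := hr a 0 1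
    have hs : F (Mk a 0 1) = F (Mk a 0 0) + F (Mk 0 0 1) := by
      have := hAdd a 0 0 0 0 1
      simpa using this
    rw [hs] at hv
    have h0 := congrFun hv 0
    have h2 := congrFun hv 2
    simp [hA0, hC2, hKc] at h0 h2
    rw [h2, ← h0]
  refine ⟨![x₀, y₀], ?_⟩
  rintro M ⟨a, b, c, rfl⟩
  have hsplit : F (Mk a b c) = F (Mk a 0 0) + F (Mk 0 b 0) + F (Mk 0 0 c) := by
    have h1 : F (Mk a b 0) = F (Mk a 0 0) + F (Mk 0 b 0) := by
      have := hAdd a 0 0 0 b 0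
      simpa using this
    have h2 : F (Mk a b c) = F (Mk a b 0) + F (Mk 0 0 c) := by
      have := hAdd a b 0 0 0 c
      simpa using this
    rw [h2, h1]
  have hgoal : F (Mk a b c) = (Mk a b c).mulVec ![x₀, y₀] := by
    rw [hsplit, hmv]
    ext i
    fin_cases i <;>
      simp [hA0, hB1, hB2, hC1, hC2, hHb, hKc, hG1, hG2]
  exact hgoal
end

section
/- Let K be a field, S a linear subspace of Mat_{n,p}(K), i ∈ {1,…,n}, and F : S → K^n a range-compatible group homomorphism. Then there exists a group homomorphism F_i : L_i(S) → K, where L_i(S) = { i-th row of M : M ∈ S }, such that the i-th entry of F(M) equals F_i(i-th row of M) for all M ∈ S. -/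
theorem stmt_17 {K : Type*} [Field K] (n p : ℕ)
    (S : Submodule K (Matrix (Fin n) (Fin p) K)) (i : Fin n)
    (F : S →+ (Fin n → K))
    (hrc : ∀ M : S, F M ∈ Set.range (M : Matrix (Fin n) (Fin p) K).mulVec) :
    ∃ Fi : (Fin p → K) → K,
      (∀ r₁ r₂ : Fin p → K,
        r₁ ∈ (fun M : Matrix (Fin n) (Fin p) K => M i) '' (S : Set (Matrix (Fin n) (Fin p) K)) →
        r₂ ∈ (fun M : Matrix (Fin n) (Fin p) K => M i) '' (S : Set (Matrix (Fin n) (Fin p) K)) →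
        Fi (r₁ + r₂) = Fi r₁ + Fi r₂) ∧
      ∀ M : S, F M i = Fi ((M : Matrix (Fin n) (Fin p) K) i) := by
  classical
  -- well-definedness
  have key : ∀ M N : S, (M : Matrix (Fin n) (Fin p) K) i = (N : Matrix (Fin n) (Fin p) K) i →
      F M i = F N i := by
    intro M N h
    obtain ⟨x, hx⟩ := hrc (M - N)
    have h0 : F (M - N) i = 0 := by
      rw [← hx]
      have : ((M - N : S) : Matrix (Fin n) (Fin p) K) i = 0 := by
        simp only [Submodule.coe_sub]
        funext j
        simp [Matrix.sub_apply, congrFun h j]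
      show ((M - N : S) : Matrix (Fin n) (Fin p) K).mulVec x i = 0
      simp [Matrix.mulVec, dotProduct, this]
    have := congrFun (map_sub F M N) i
    rw [h0] at this
    simpa [sub_eq_zero] using this.symm
  set Fi : (Fin p → K) → K := fun r =>
    if h : ∃ M : S, (M : Matrix (Fin n) (Fin p) K) i = r then F h.choose i else 0 with hFi
  have hspec : ∀ M : S, Fi ((M : Matrix (Fin n) (Fin p) K) i) = F M i := by
    intro M
    have h : ∃ N : S, (N : Matrix (Fin n) (Fin p) K) i = (M : Matrix (Fin n) (Fin p) K) i :=
      ⟨M, rfl⟩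
    rw [hFi]
    simp only [dif_pos h]
    exact key h.choose M h.choose_spec
  refine ⟨Fi, ?_, fun M => (hspec M).symm⟩
  rintro r₁ r₂ ⟨M₁, hM₁, rfl⟩ ⟨M₂, hM₂, rfl⟩
  have e1 := hspec ⟨M₁, hM₁⟩
  have e2 := hspec ⟨M₂, hM₂⟩
  have e3 := hspec (⟨M₁, hM₁⟩ + ⟨M₂, hM₂⟩ : S)
  simp only [Submodule.coe_add, map_add, Pi.add_apply] at e3
  show Fi (M₁ i + M₂ i) = Fi (M₁ i) + Fi (M₂ i)
  exact e3.trans (by rw [← e1, ← e2])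
end

section
/- Let K be a field with char K = 2, and let f, g, u, v : K → K be additive maps satisfying g(t²x) + v(tx) = t·f(x) + t·u(tx) for all x, t ∈ K. Then there exist scalars λ, μ ∈ K and a root-linear additive map α : K → K (i.e., α(t²x) = t·α(x)) such that f(x) = λx + α(x), u(x) = μx, v(x) = λx, and g(x) = μx + α(x) for all x ∈ K. -/
theorem stmt_18 {K : Type*} [Field K] [CharP K 2]
    (f g u v : K → K)
    (hf : ∀ x y : K, f (x + y) = f x + f y)
    (hg : ∀ x y : K, g (x + y) = g x + g y)
    (hu : ∀ x y : K, u (x + y) = u x + u y)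
    (hv : ∀ x y : K, v (x + y) = v x + v y)
    (hid : ∀ x t : K, g (t ^ 2 * x) + v (t * x) = t * f x + t * u (t * x)) :
    ∃ (l m : K) (α : K → K),
      (∀ x y : K, α (x + y) = α x + α y) ∧
      (∀ t x : K, α (t ^ 2 * x) = t * α x) ∧
      ∀ x : K, f x = l * x + α x ∧ u x = m * x ∧ v x = l * x ∧ g x = m * x + α x := by
  have two0 : (2 : K) = 0 := CharTwo.two_eq_zero
  -- u is K-linear
  have hu_tx : ∀ t x : K, u (t * x) = t * u x := by
    intro t x
    have h1 := hid x (t + 1)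
    have e1 : (t + 1) ^ 2 * x = t ^ 2 * x + x := by linear_combination t * x * two0
    have e2 : (t + 1) * x = t * x + x := by ring
    rw [e1, e2, hg, hv, hu] at h1
    have h2 := hid x t
    have h3 := hid x 1
    simp only [one_pow, one_mul] at h3
    linear_combination h2 + h3 - h1 - t * u x * two0
  have hu_eq : ∀ x : K, u x = u 1 * x := by
    intro x
    have h := hu_tx x 1
    rw [mul_one] at h
    rw [h]; ring
  -- g in terms of f, v, u 1
  have hgv : ∀ x : K, g x = f x + v x + u 1 * x := by
    intro x
    have h3 := hid x 1
    simp only [one_pow, one_mul] at h3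
    linear_combination h3 + hu_eq x - v x * two0
  -- key functional equation (A)
  have hA : ∀ t x : K, f (t ^ 2 * x) = t * f x + v (t * x) + v (t ^ 2 * x) := by
    intro t x
    have h2 := hid x t
    linear_combination h2 - hgv (t ^ 2 * x) - t * hu_eq (t * x) +
      (t * u (t * x) - v (t * x) - v (t ^ 2 * x) - u 1 * (t ^ 2 * x)) * two0
  -- equation (B)
  have hB : ∀ t s x : K,
      v (t * (s * x)) = t * v (s * x) + t * v (s ^ 2 * x) + v (t * (s ^ 2 * x)) := by
    intro t s x
    have h1 := hA (t * s) x
    have e1 : (t * s) ^ 2 * x = t ^ 2 * (s ^ 2 * x) := by ring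
    have e2 : (t * s) * x = t * (s * x) := by ring
    rw [e1, e2] at h1
    have h2 := hA t (s ^ 2 * x)
    have h3 := hA s x
    linear_combination h2 - h1 + t * h3
  -- multiplicativity relation for v
  have hv_mul : ∀ t s : K, s ≠ 0 → v t = t * v 1 + t * v s + v (t * s) := by
    intro t s hs
    have h := hB t s s⁻¹
    have e1 : s * s⁻¹ = 1 := mul_inv_cancel₀ hs
    have e2 : s ^ 2 * s⁻¹ = s := by rw [sq, mul_assoc, e1, mul_one]
    rw [e1, e2, mul_one] at h
    exact h
  -- v is linear
  have hv_eq : ∀ x : K, v x = v 1 * x := by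
    intro a
    by_cases h0 : a = 0
    · have v0 : v 0 = 0 := by
        have h := hv 0 0
        rw [add_zero] at h
        exact (left_eq_add.mp h)
      rw [h0, v0, mul_zero]
    by_cases h1 : a = 1
    · rw [h1, mul_one]
    have ha1 : a + 1 ≠ 0 := by
      intro h
      exact h1 (by linear_combination h - two0)
    have E1 := hv_mul (a + 1) a h0
    have E2 := hv_mul a (a + 1) ha1
    rw [show (a + 1) * a = a * (a + 1) from mul_comm _ _] at E1
    have hadd := hv a 1
    linear_combination E2 - E1 + (1 + a) * hadd
  refine ⟨v 1, u 1, fun x => f x + v 1 * x, ?_, ?_, ?_⟩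
  · intro x y
    show f (x + y) + v 1 * (x + y) = (f x + v 1 * x) + (f y + v 1 * y)
    rw [hf]; ring
  · intro t x
    show f (t ^ 2 * x) + v 1 * (t ^ 2 * x) = t * (f x + v 1 * x)
    have h := hA t x
    rw [hv_eq (t * x), hv_eq (t ^ 2 * x)] at h
    linear_combination h + (v 1 * t ^ 2 * x) * two0
  · intro x
    refine ⟨?_, hu_eq x, hv_eq x, ?_⟩
    · show f x = v 1 * x + (f x + v 1 * x)
      linear_combination (-(v 1 * x)) * two0
    · show g x = u 1 * x + (f x + v 1 * x)
      linear_combination hgv x + hv_eq x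
end

section
/- Let K be a field of characteristic not 2, and let f, g, u, v : K → K be additive maps satisfying g(t²x) + v(tx) = t·f(x) + t·u(tx) for all x, t ∈ K. Then there exist scalars λ, μ ∈ K such that f(x) = λx, u(x) = μx, v(x) = λx, and g(x) = μx for all x ∈ K. -/
lemma aux_addhom {K : Type*} [Field K] (f : K → K)
    (hf : ∀ x y : K, f (x + y) = f x + f y) :
    f 0 = 0 ∧ ∀ x : K, f (-x) = - f x := by
  have h0 : f 0 = 0 := by
    have h := hf 0 0
    rw [add_zero] at h
    linear_combination -h
  refine ⟨h0, fun x => ?_⟩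
  have h := hf x (-x)
  rw [add_neg_cancel, h0] at h
  linear_combination -h

theorem stmt_19 {K : Type*} [Field K] (hchar : ringChar K ≠ 2)
    (f g u v : K → K)
    (hf : ∀ x y : K, f (x + y) = f x + f y)
    (hg : ∀ x y : K, g (x + y) = g x + g y)
    (hu : ∀ x y : K, u (x + y) = u x + u y)
    (hv : ∀ x y : K, v (x + y) = v x + v y)
    (hid : ∀ x t : K, g (t ^ 2 * x) + v (t * x) = t * f x + t * u (t * x)) :
    ∃ l m : K, ∀ x : K, f x = l * x ∧ u x = m * x ∧ v x = l * x ∧ g x = m * x := by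
  have two_ne : (2 : K) ≠ 0 := Ring.two_ne_zero hchar
  obtain ⟨hu0, huneg⟩ := aux_addhom u hu
  obtain ⟨hv0, hvneg⟩ := aux_addhom v hv
  have key : ∀ x t : K, v (t * x) = t * f x ∧ g (t ^ 2 * x) = t * u (t * x) := by
    intro x t
    have h1 := hid x t
    have h2 := hid x (-t)
    simp only [neg_sq, neg_mul, hvneg, huneg, mul_neg, neg_neg] at h2
    constructor
    · have h : 2 * v (t * x) = 2 * (t * f x) := by linear_combination h1 - h2
      exact mul_left_cancel₀ two_ne h
    · have hgu : 2 * g (t ^ 2 * x) = 2 * (t * u (t * x)) := by linear_combination h1 + h2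
      exact mul_left_cancel₀ two_ne hgu
  -- v = f
  have hvf : ∀ x : K, v x = f x := by
    intro x
    have := (key x 1).1
    simpa using this
  -- f linear
  have hflin : ∀ x : K, f x = f 1 * x := by
    intro x
    have := (key 1 x).1
    rw [mul_one, hvf] at this
    rw [this, mul_comm]
  -- g = u
  have hgu : ∀ x : K, g x = u x := by
    intro x
    have h1 := hid x 1
    simp only [one_pow, one_mul] at h1
    have h2 := hvf x
    linear_combination h1 - h2
  -- u linear
  have hulin : ∀ x : K, u x = u 1 * x := by
    intro x
    rcases eq_or_ne x 0 with rfl | hx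
    · simp [hu0]
    · have := (key x⁻¹ x).2
      rw [mul_inv_cancel₀ hx] at this
      have hx2 : x ^ 2 * x⁻¹ = x := by field_simp
      rw [hx2, hgu x] at this
      rw [this, mul_comm]
  refine ⟨f 1, u 1, fun x => ⟨hflin x, hulin x, by rw [hvf, hflin], ?_⟩⟩
  rw [hgu, hulin]
end
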